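/- arXiv:1008.1987 — 6 statements merged into one kernel-verified Lean document; each statement's English description precedes it below -/
import Mathlib

section
/- For each i with 1 ≤ i ≤ n+1, the element [e_1, ..., ê_i, ..., e_{n+1}] = (-1)^{n+i+1} e_i defines an alternating n-ary multilinear bracket on the (n+1)-dimensional vector space with basis e_1, ..., e_{n+1} that satisfies the generalized Jacobi identity [[x_1,...,x_n], y_2,...,y_n] = Σ_{i=1}^n [x_1,...,[x_i,y_2,...,y_n],...,x_n]; i.e., L_{n+1} is an n-Lie algebra. -/
/-- The bracket of the `(n+1)`-dimensional algebra `L_{n+1}`: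
the multilinear extension of `[e_1, ..., ê_i, ..., e_{n+1}] = (-1)^{n+i+1} e_i`
(written here with `0`-indexed basis vectors, so that the `1`-indexed sign
`(-1)^{n+i+1}` becomes `(-1)^{n+i}` for `i : Fin (n+1)`). -/
noncomputable def simpleBracket (F : Type) [Field F] (n : ℕ)
    (v : Fin n → (Fin (n + 1) → F)) : Fin (n + 1) → F :=
  ∑ i : Fin (n + 1),
    ((-1 : F) ^ (n + (i : ℕ)) *
      Matrix.det (Matrix.of fun k l : Fin n => v k (i.succAbove l))) • (Pi.single i 1 : Fin (n + 1) → F)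

section Aux

open Matrix Finset

variable {F : Type} [Field F]

/-- Componentwise formula for `simpleBracket`. -/
lemma simpleBracket_apply' (m : ℕ) (v : Fin (m + 1) → (Fin (m + 2) → F)) (j : Fin (m + 2)) :
    simpleBracket F (m + 1) v j =
      (-1 : F) ^ (m + 1 + (j : ℕ)) *
        Matrix.det (Matrix.of fun k l : Fin (m + 1) => v k (j.succAbove l)) := by
  simp [simpleBracket, Finset.sum_apply, Pi.single_apply, mul_ite, Finset.sum_ite_eq']

/-- The `j`-th component of the bracket is the determinant of the matrix obtained by
appending the basis vector `e_j` as a last row. -/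
lemma simpleBracket_apply (m : ℕ) (v : Fin (m + 1) → (Fin (m + 2) → F)) (j : Fin (m + 2)) :
    simpleBracket F (m + 1) v j =
      (Matrix.of (Fin.snoc v (Pi.single j 1) : Fin (m + 2) → Fin (m + 2) → F)).det := by
  rw [Matrix.det_succ_row _ (Fin.last (m + 1)), simpleBracket_apply']
  have key : ∀ j' : Fin (m + 2),
      (Matrix.of (Fin.snoc v (Pi.single j 1) : Fin (m + 2) → Fin (m + 2) → F)).submatrix
        (Fin.last (m + 1)).succAbove j'.succAbove
      = Matrix.of fun k l : Fin (m + 1) => v k (j'.succAbove l) := by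
    intro j'
    ext k l
    simp [Fin.succAbove_last, Fin.snoc_castSucc]
  simp only [key]
  simp [Fin.snoc_last, Pi.single_apply, mul_ite, Finset.sum_ite_eq', Fin.val_last]

/-- The "trace identity": replace each row in turn by a fixed linear image of itself and sum
the determinants; the result is `trace A * det Y`. -/
lemma trace_det_sum {N : ℕ} (Y A : Matrix (Fin N) (Fin N) F) :
    ∑ i, (Y.updateRow i (A *ᵥ Y i)).det = A.trace * Y.det := by
  have h1 : ∀ i : Fin N, (Y.updateRow i (A *ᵥ Y i)).det
      = (Yᵀ.adjugate * A * Yᵀ) i i := by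
    intro i
    rw [← Matrix.cramer_transpose_apply, Matrix.cramer_eq_adjugate_mulVec,
      Matrix.mulVec_mulVec]
    simp [Matrix.mul_apply, Matrix.mulVec, dotProduct, Matrix.transpose_apply]
  simp_rw [h1]
  have h2 : ∑ i : Fin N, (Yᵀ.adjugate * A * Yᵀ) i i = (Yᵀ.adjugate * A * Yᵀ).trace := rfl
  rw [h2, Matrix.trace_mul_cycle, Matrix.mul_adjugate, Matrix.smul_mul, one_mul,
    Matrix.trace_smul, Matrix.det_transpose, smul_eq_mul, mul_comm]

/-- Expanding the determinant linearly along one (replaced) row. -/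
lemma det_updateRow_expand {N : ℕ} (M : Matrix (Fin N) (Fin N) F) (r : Fin N) (z : Fin N → F) :
    (M.updateRow r z).det = ∑ k, z k * (M.updateRow r (Pi.single k 1)).det := by
  have hz : z = ∑ k, z k • (Pi.single k 1 : Fin N → F) := by
    funext c
    simp [Pi.single_apply, Finset.sum_apply, mul_ite, Finset.sum_ite_eq']
  conv_lhs => rw [← Matrix.cramer_transpose_apply, hz, map_sum]
  simp [Finset.sum_apply, Matrix.cramer_transpose_apply]

lemma snoc_cons_zero {m : ℕ} {α : Sort*} (w : Fin m → α) (a b : α) :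
    (Fin.snoc (Fin.cons a w) b : Fin (m + 2) → α) 0 = a := by
  have h := @Fin.snoc_castSucc (m + 1) (fun _ => α) b (Fin.cons a w) 0
  simpa using h

omit [Field F] in
lemma of_snoc_update (m : ℕ) (v : Fin (m + 1) → (Fin (m + 2) → F))
    (u z : Fin (m + 2) → F) (k : Fin (m + 1)) :
    (Matrix.of (Fin.snoc (Function.update v k z) u : Fin (m + 2) → Fin (m + 2) → F)) =
      (Matrix.of (Fin.snoc v u : Fin (m + 2) → Fin (m + 2) → F)).updateRow k.castSucc z := by
  ext r c
  rw [Matrix.updateRow_apply]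
  refine Fin.lastCases ?_ (fun i => ?_) r
  · rw [if_neg (Fin.castSucc_lt_last k).ne']
    simp [Function.update_of_ne (Fin.castSucc_lt_last k).ne']
  · rcases eq_or_ne i k with rfl | h
    · simp
    · rw [if_neg (by simpa using h)]
      simp [Function.update_of_ne h, Function.update_of_ne ((Fin.castSucc_injective _).ne h)]

omit [Field F] in
lemma of_snoc_updateLast (m : ℕ) (x : Fin (m + 1) → (Fin (m + 2) → F))
    (u v : Fin (m + 2) → F) :
    (Matrix.of (Fin.snoc x u : Fin (m + 2) → Fin (m + 2) → F)).updateRow (Fin.last (m + 1)) v =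
      Matrix.of (Fin.snoc x v : Fin (m + 2) → Fin (m + 2) → F) := by
  ext r c
  rw [Matrix.updateRow_apply]
  refine Fin.lastCases ?_ (fun i => ?_) r
  · simp
  · rw [if_neg (Fin.castSucc_lt_last i).ne]
    simp

/-- Swapping the first and the last row of an `(m+2) × (m+2)` matrix negates the determinant. -/
lemma det_swap_rows (m : ℕ) (w : Fin m → (Fin (m + 2) → F)) (a b : Fin (m + 2) → F) :
    (Matrix.of (Fin.snoc (Fin.cons a w) b : Fin (m + 2) → Fin (m + 2) → F)).det =
      - (Matrix.of (Fin.snoc (Fin.cons b w) a : Fin (m + 2) → Fin (m + 2) → F)).det := by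
  have hne : (0 : Fin (m + 2)) ≠ Fin.last (m + 1) := by
    simp [Fin.ext_iff]
  have key : (Matrix.of (Fin.snoc (Fin.cons b w) a : Fin (m + 2) → Fin (m + 2) → F)).submatrix
      (Equiv.swap (0 : Fin (m + 2)) (Fin.last (m + 1))) id
      = Matrix.of (Fin.snoc (Fin.cons a w) b : Fin (m + 2) → Fin (m + 2) → F) := by
    ext r c
    rw [Matrix.submatrix_apply, id]
    refine Fin.lastCases ?_ (fun i => ?_) r
    · rw [Equiv.swap_apply_right]
      simp [snoc_cons_zero]
    · refine Fin.cases ?_ (fun p => ?_) i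
      · rw [show (Fin.castSucc 0 : Fin (m + 2)) = 0 from rfl, Equiv.swap_apply_left]
        simp [snoc_cons_zero]
      · have h1 : (Fin.castSucc (Fin.succ p) : Fin (m + 2)) ≠ 0 := by
          simp [Fin.ext_iff]
        have h2 : (Fin.castSucc (Fin.succ p) : Fin (m + 2)) ≠ Fin.last (m + 1) :=
          (Fin.castSucc_lt_last _).ne
        rw [Equiv.swap_apply_of_ne_of_ne h1 h2]
        simp only [Matrix.of_apply, Fin.snoc_castSucc, Fin.cons_succ]
  calc (Matrix.of (Fin.snoc (Fin.cons a w) b : Fin (m + 2) → Fin (m + 2) → F)).det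
      = ((Matrix.of (Fin.snoc (Fin.cons b w) a : Fin (m + 2) → Fin (m + 2) → F)).submatrix
          (Equiv.swap (0 : Fin (m + 2)) (Fin.last (m + 1))) id).det := by rw [key]
    _ = _ := by
        rw [Matrix.det_permute, Equiv.Perm.sign_swap hne]
        simp

/-- Linearity of the bracket in the first slot, expanded on the standard basis. -/
lemma simpleBracket_cons_expand (m : ℕ) (w : Fin m → (Fin (m + 2) → F))
    (z : Fin (m + 2) → F) (j : Fin (m + 2)) :
    simpleBracket F (m + 1) (Fin.cons z w) j =
      ∑ k, simpleBracket F (m + 1) (Fin.cons (Pi.single k 1) w) j * z k := by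
  have h0 : ∀ u : Fin (m + 2) → F,
      (Fin.cons u w : Fin (m + 1) → Fin (m + 2) → F) = Function.update (Fin.cons 0 w) 0 u := by
    intro u
    rw [Fin.update_cons_zero]
  rw [simpleBracket_apply, h0 z, of_snoc_update, det_updateRow_expand]
  refine Finset.sum_congr rfl fun k _ => ?_
  rw [← of_snoc_update, ← h0, ← simpleBracket_apply, mul_comm]

end Aux

/-- `L_{n+1}` is an `n`-Lie algebra: its bracket takes the prescribed values on the
basis, is multilinear, alternating, and satisfies the generalized Jacobi identity. -/
theorem simple_nLie_is_nLie (F : Type) [Field F] (hF : ringChar F ≠ 2)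
    (m : ℕ) (hm : 2 ≤ m) :
    -- values on the basis: `[e_1, ..., ê_i, ..., e_{n+1}] = (-1)^{n+i+1} e_i` with `n = m+1`
    (∀ i : Fin (m + 2),
      simpleBracket F (m + 1) (fun k => Pi.single (i.succAbove k) (1 : F)) =
        (-1 : F) ^ (m + 1 + (i : ℕ)) • (Pi.single i 1 : Fin (m + 2) → F)) ∧
    -- multilinearity in each argument
    (∀ (k : Fin (m + 1)) (v : Fin (m + 1) → (Fin (m + 2) → F)) (c : F)
        (x y : Fin (m + 2) → F),
      simpleBracket F (m + 1) (Function.update v k (c • x + y)) =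
        c • simpleBracket F (m + 1) (Function.update v k x) +
          simpleBracket F (m + 1) (Function.update v k y)) ∧
    -- the alternating identity
    (∀ (σ : Equiv.Perm (Fin (m + 1))) (v : Fin (m + 1) → (Fin (m + 2) → F)),
      simpleBracket F (m + 1) (fun k => v (σ k)) =
        (Equiv.Perm.sign σ : ℤ) • simpleBracket F (m + 1) v) ∧
    -- the generalized Jacobi (derivation) identity
    (∀ (x : Fin (m + 1) → (Fin (m + 2) → F)) (w : Fin m → (Fin (m + 2) → F)),
      simpleBracket F (m + 1) (Fin.cons (simpleBracket F (m + 1) x) w) =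
        ∑ i : Fin (m + 1),
          simpleBracket F (m + 1)
            (Function.update x i (simpleBracket F (m + 1) (Fin.cons (x i) w)))) := by
  refine ⟨?_, ?_, ?_, ?_⟩
  · -- values on the basis
    intro i
    funext j
    rw [simpleBracket_apply']
    rcases eq_or_ne j i with rfl | h
    · have h1 : (Matrix.of fun k l : Fin (m + 1) =>
          (Pi.single (j.succAbove k) (1 : F) : Fin (m + 2) → F) (j.succAbove l)) = 1 := by
        ext k l
        simp [Pi.single_apply, Matrix.one_apply, Fin.succAbove_right_inj, eq_comm]
      rw [h1, Matrix.det_one]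
      simp
    · obtain ⟨k0, hk0⟩ := Fin.exists_succAbove_eq h
      have h0 : (Matrix.of fun k l : Fin (m + 1) =>
          (Pi.single (i.succAbove k) (1 : F) : Fin (m + 2) → F) (j.succAbove l)).det = 0 := by
        apply Matrix.det_eq_zero_of_row_eq_zero k0
        intro l
        simp only [Matrix.of_apply, hk0, Pi.single_apply, ite_eq_right_iff, one_ne_zero]
        exact fun hh => absurd hh (Fin.succAbove_ne j l)
      rw [h0]
      simp [Pi.single_apply, h]
  · -- multilinearity
    intro k v c x y
    funext j
    rw [Pi.add_apply, Pi.smul_apply, smul_eq_mul,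
      simpleBracket_apply, simpleBracket_apply, simpleBracket_apply,
      of_snoc_update, of_snoc_update, of_snoc_update,
      Matrix.det_updateRow_add, Matrix.det_updateRow_smul]
  · -- alternating
    intro σ v
    funext j
    rw [Pi.smul_apply, simpleBracket_apply', simpleBracket_apply']
    have key : (Matrix.of fun k l : Fin (m + 1) => v (σ k) (j.succAbove l))
        = (Matrix.of fun k l : Fin (m + 1) => v k (j.succAbove l)).submatrix σ id := by
      ext k l
      simp
    rw [key, Matrix.det_permute, zsmul_eq_mul]
    ring
  · -- generalized Jacobi identity
    intro x w
    set A : Matrix (Fin (m + 2)) (Fin (m + 2)) F :=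
      Matrix.of fun j k => simpleBracket F (m + 1) (Fin.cons (Pi.single k 1) w) j with hAdef
    have hlin : ∀ (z : Fin (m + 2) → F) (j : Fin (m + 2)),
        simpleBracket F (m + 1) (Fin.cons z w) j = ∑ k, A j k * z k :=
      fun z j => simpleBracket_cons_expand m w z j
    -- skew-symmetry of A
    have hskew : ∀ j k : Fin (m + 2), A j k = - A k j := by
      intro j k
      show simpleBracket F (m + 1) (Fin.cons (Pi.single k 1) w) j
        = - simpleBracket F (m + 1) (Fin.cons (Pi.single j 1) w) k
      rw [simpleBracket_apply, simpleBracket_apply, det_swap_rows]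
    -- vanishing diagonal, hence vanishing trace
    have hdiag : ∀ j : Fin (m + 2), A j j = 0 := by
      intro j
      show simpleBracket F (m + 1) (Fin.cons (Pi.single j 1) w) j = 0
      rw [simpleBracket_apply]
      refine Matrix.det_zero_of_row_eq (i := 0) (j := Fin.last (m + 1)) (by simp [Fin.ext_iff]) ?_
      show (Fin.snoc (Fin.cons (Pi.single j 1) w) (Pi.single j 1) : Fin (m + 2) → Fin (m + 2) → F) 0
        = (Fin.snoc (Fin.cons (Pi.single j 1) w) (Pi.single j 1) : Fin (m + 2) → Fin (m + 2) → F)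
            (Fin.last (m + 1))
      rw [snoc_cons_zero, Fin.snoc_last]
    have htrace : A.trace = 0 := by
      simp [Matrix.trace, Matrix.diag, hdiag]
    funext j
    set Y : Matrix (Fin (m + 2)) (Fin (m + 2)) F :=
      Matrix.of (Fin.snoc x (Pi.single j 1) : Fin (m + 2) → Fin (m + 2) → F) with hYdef
    have hYrow : ∀ i : Fin (m + 1), Y i.castSucc = x i := by
      intro i
      show (Fin.snoc x (Pi.single j 1) : Fin (m + 2) → Fin (m + 2) → F) i.castSucc = x i
      rw [Fin.snoc_castSucc]
    have hYlast : Y (Fin.last (m + 1)) = Pi.single j 1 := by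
      show (Fin.snoc x (Pi.single j 1) : Fin (m + 2) → Fin (m + 2) → F) (Fin.last (m + 1)) = _
      rw [Fin.snoc_last]
    -- the trace identity applied to Y and A
    have hkey := trace_det_sum Y A
    rw [htrace, zero_mul, Fin.sum_univ_castSucc] at hkey
    -- identify the RHS of the Jacobi identity
    have hRHS : (∑ i : Fin (m + 1),
        simpleBracket F (m + 1)
          (Function.update x i (simpleBracket F (m + 1) (Fin.cons (x i) w)))) j
        = ∑ i : Fin (m + 1), (Y.updateRow i.castSucc (Matrix.mulVec A (Y i.castSucc))).det := by
      rw [Finset.sum_apply]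
      refine Finset.sum_congr rfl fun i _ => ?_
      rw [simpleBracket_apply, of_snoc_update]
      have hz : simpleBracket F (m + 1) (Fin.cons (x i) w) = Matrix.mulVec A (Y i.castSucc) := by
        funext r
        rw [hlin (x i) r, hYrow i]
        simp [Matrix.mulVec, dotProduct]
      rw [hz]
    -- compute the last term
    have hlast : (Y.updateRow (Fin.last (m + 1)) (Matrix.mulVec A (Y (Fin.last (m + 1))))).det
        = ∑ k, A k j * simpleBracket F (m + 1) x k := by
      rw [hYlast, Matrix.mulVec_single, det_updateRow_expand]
      refine Finset.sum_congr rfl fun k _ => ?_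
      rw [hYdef, of_snoc_updateLast, ← simpleBracket_apply]
      simp
    -- compute the LHS of the Jacobi identity
    have hLHS : simpleBracket F (m + 1) (Fin.cons (simpleBracket F (m + 1) x) w) j
        = ∑ k, A j k * simpleBracket F (m + 1) x k :=
      hlin _ j
    rw [hLHS, hRHS]
    have : ∑ i : Fin (m + 1), (Y.updateRow i.castSucc (Matrix.mulVec A (Y i.castSucc))).det
        = - (Y.updateRow (Fin.last (m + 1)) (Matrix.mulVec A (Y (Fin.last (m + 1))))).det :=
      eq_neg_of_add_eq_zero_left hkey
    rw [this, hlast]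
    rw [← Finset.sum_neg_distrib]
    refine Finset.sum_congr rfl fun k _ => ?_
    rw [hskew j k]
    ring
end

section
/- Let n ≥ 3 be odd, let F be a field of characteristic ≠ 2, and let L_{n+1} be the simple n-Lie algebra with basis e_1,...,e_{n+1} and bracket [e_1,...,ê_i,...,e_{n+1}] = (-1)^{n+i+1} e_i. If A is an associative algebra and j : L_{n+1} → A is a linear map satisfying j([z_1,...,z_n]) = Σ_{σ∈S_n} ε(σ) j(z_{σ(1)}) ⋯ j(z_{σ(n)}) for all z_1,...,z_n ∈ L_{n+1}, then j(e_1)² + j(e_2)² + ⋯ + j(e_{n+1})² = 0 in A. -/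
namespace SumSqAux

open Equiv Equiv.Perm Finset

variable {n : ℕ}

/-- The permutation sending `0 ↦ i` and `k.succ ↦ i.succAbove (σ k)`. -/
def permD (i : Fin (n + 1)) (σ : Equiv.Perm (Fin n)) : Equiv.Perm (Fin (n + 1)) :=
  (Fin.cycleRange i)⁻¹ * Equiv.Perm.decomposeFin.symm (0, σ)

lemma permD_zero (i : Fin (n + 1)) (σ : Equiv.Perm (Fin n)) : permD i σ 0 = i := by
  simp only [permD, Equiv.Perm.mul_apply, Equiv.Perm.decomposeFin_symm_apply_zero]
  rw [Equiv.Perm.inv_eq_iff_eq, Fin.cycleRange_self]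

lemma permD_succ (i : Fin (n + 1)) (σ : Equiv.Perm (Fin n)) (k : Fin n) :
    permD i σ k.succ = i.succAbove (σ k) := by
  simp only [permD, Equiv.Perm.mul_apply, Equiv.Perm.decomposeFin_symm_apply_succ,
    Equiv.swap_self, Equiv.refl_apply]
  rw [Equiv.Perm.inv_eq_iff_eq, Fin.cycleRange_succAbove]

lemma sign_permD (i : Fin (n + 1)) (σ : Equiv.Perm (Fin n)) :
    Equiv.Perm.sign (permD i σ) = (-1) ^ (i : ℕ) * Equiv.Perm.sign σ := by
  simp [permD, Equiv.Perm.decomposeFin.symm_sign, Fin.sign_cycleRange]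

lemma permD_bijective :
    Function.Bijective (fun p : Fin (n + 1) × Equiv.Perm (Fin n) => permD p.1 p.2) := by
  rw [Fintype.bijective_iff_injective_and_card]
  constructor
  · rintro ⟨i, σ⟩ ⟨i', σ'⟩ h
    simp only at h
    have hi : i = i' := by rw [← permD_zero i σ, h, permD_zero]
    subst hi
    have h2 : Equiv.Perm.decomposeFin.symm ((0 : Fin (n + 1)), σ)
        = Equiv.Perm.decomposeFin.symm ((0 : Fin (n + 1)), σ') :=
      mul_left_cancel (a := (Fin.cycleRange i)⁻¹) h
    have h3 := Equiv.Perm.decomposeFin.symm.injective h2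
    simpa using h3
  · simp [Fintype.card_perm, Nat.factorial_succ]

variable {B : Type} [Ring B]

lemma expandA (w : Fin (n + 1) → B) :
    (∑ τ : Equiv.Perm (Fin (n + 1)),
        (Equiv.Perm.sign τ : ℤ) • (List.ofFn fun k => w (τ k)).prod)
    = ∑ i : Fin (n + 1), ((-1 : ℤ) ^ (i : ℕ)) •
        (w i * ∑ σ : Equiv.Perm (Fin n),
          (Equiv.Perm.sign σ : ℤ) • (List.ofFn fun k => w (i.succAbove (σ k))).prod) := by
  rw [← Fintype.sum_bijective _ permD_bijective
    (fun p : Fin (n + 1) × Equiv.Perm (Fin n) =>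
      (Equiv.Perm.sign (permD p.1 p.2) : ℤ) • (List.ofFn fun k => w (permD p.1 p.2 k)).prod)
    _ (fun p => rfl)]
  rw [Fintype.sum_prod_type]
  refine Finset.sum_congr rfl fun i _ => ?_
  rw [Finset.mul_sum, Finset.smul_sum]
  refine Finset.sum_congr rfl fun σ _ => ?_
  rw [List.ofFn_succ, List.prod_cons, permD_zero]
  simp only [permD_succ]
  rw [sign_permD, mul_smul_comm]
  simp [mul_smul]

lemma expandB (w : Fin (n + 1) → B) :
    (∑ τ : Equiv.Perm (Fin (n + 1)),
        (Equiv.Perm.sign τ : ℤ) • (List.ofFn fun k => w (τ k)).prod)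
    = ∑ i : Fin (n + 1), ((-1 : ℤ) ^ (n + (i : ℕ))) •
        ((∑ σ : Equiv.Perm (Fin n),
          (Equiv.Perm.sign σ : ℤ) • (List.ofFn fun k => w (i.succAbove (σ k))).prod) * w i) := by
  rw [← Fintype.sum_bijective (fun τ => τ * finRotate (n + 1))
    (Equiv.mulRight (finRotate (n + 1))).bijective
    (fun τ : Equiv.Perm (Fin (n + 1)) =>
      (Equiv.Perm.sign (τ * finRotate (n + 1)) : ℤ) •
        (List.ofFn fun k => w ((τ * finRotate (n + 1)) k)).prod)
    _ (fun τ => rfl)]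
  rw [← Fintype.sum_bijective _ permD_bijective
    (fun p : Fin (n + 1) × Equiv.Perm (Fin n) =>
      (Equiv.Perm.sign (permD p.1 p.2 * finRotate (n + 1)) : ℤ) •
        (List.ofFn fun k => w ((permD p.1 p.2 * finRotate (n + 1)) k)).prod)
    _ (fun p => rfl)]
  rw [Fintype.sum_prod_type]
  refine Finset.sum_congr rfl fun i _ => ?_
  rw [Finset.sum_mul, Finset.smul_sum]
  refine Finset.sum_congr rfl fun σ _ => ?_
  have hword : (List.ofFn fun k => w ((permD i σ * finRotate (n + 1)) k))
      = (List.ofFn fun k => w (i.succAbove (σ k))).concat (w i) := by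
    rw [List.ofFn_succ']
    congr 1
    · refine congrArg List.ofFn (funext fun k => ?_)
      rw [Equiv.Perm.mul_apply, finRotate_succ_apply, Fin.coeSucc_eq_succ, permD_succ]
    · rw [Equiv.Perm.mul_apply, finRotate_succ_apply, Fin.last_add_one, permD_zero]
  rw [hword, List.prod_concat, map_mul, sign_permD, sign_finRotate, smul_mul_assoc]
  simp only [Units.val_mul, Units.val_pow_eq_pow_val, Units.val_neg, Units.val_one, mul_smul,
    pow_add]
  simp only [smul_smul]
  congr 1
  simp only [Nat.add_sub_cancel, Nat.add_sub_cancel_left]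
  ring

theorem aux (F : Type) [Field F] (hF : ringChar F ≠ 2) (n : ℕ) (hodd : Odd n)
    (A : Type) [Ring A] [Algebra F A] (x : Fin (n + 1) → A)
    (key : ∀ i : Fin (n + 1),
      (∑ σ : Equiv.Perm (Fin n), (Equiv.Perm.sign σ : ℤ) •
        (List.ofFn fun k => x (i.succAbove (σ k))).prod)
      = ((-1 : F) ^ (n + (i : ℕ))) • x i) :
    ∑ i : Fin (n + 1), x i * x i = 0 := by
  set S : A := ∑ i : Fin (n + 1), x i * x i with hS
  have hA : (∑ τ : Equiv.Perm (Fin (n + 1)),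
      (Equiv.Perm.sign τ : ℤ) • (List.ofFn fun k => x (τ k)).prod) = -S := by
    rw [expandA x]
    have : ∀ i : Fin (n + 1), ((-1 : ℤ) ^ (i : ℕ)) •
        (x i * ∑ σ : Equiv.Perm (Fin n), (Equiv.Perm.sign σ : ℤ) •
          (List.ofFn fun k => x (i.succAbove (σ k))).prod) = -(x i * x i) := by
      intro i
      rw [key i, mul_smul_comm, ← Int.cast_smul_eq_zsmul F, smul_smul]
      have hc : (((-1 : ℤ) ^ (i : ℕ) : ℤ) : F) * (-1 : F) ^ (n + (i : ℕ)) = -1 := by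
        push_cast
        rw [← pow_add]
        have : Odd ((i : ℕ) + (n + (i : ℕ))) := by
          obtain ⟨m, hm⟩ := hodd
          exact ⟨(i : ℕ) + m, by omega⟩
        rw [this.neg_one_pow]
      rw [hc, neg_one_smul]
    rw [Finset.sum_congr rfl fun i _ => this i, Finset.sum_neg_distrib, hS]
  have hB : (∑ τ : Equiv.Perm (Fin (n + 1)),
      (Equiv.Perm.sign τ : ℤ) • (List.ofFn fun k => x (τ k)).prod) = S := by
    rw [expandB x]
    have : ∀ i : Fin (n + 1), ((-1 : ℤ) ^ (n + (i : ℕ))) •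
        ((∑ σ : Equiv.Perm (Fin n), (Equiv.Perm.sign σ : ℤ) •
          (List.ofFn fun k => x (i.succAbove (σ k))).prod) * x i) = x i * x i := by
      intro i
      rw [key i, smul_mul_assoc, ← Int.cast_smul_eq_zsmul F, smul_smul]
      have hc : (((-1 : ℤ) ^ (n + (i : ℕ)) : ℤ) : F) * (-1 : F) ^ (n + (i : ℕ)) = 1 := by
        push_cast
        rw [← pow_add]
        exact Even.neg_one_pow ⟨n + (i : ℕ), rfl⟩
      rw [hc, one_smul]
    rw [Finset.sum_congr rfl fun i _ => this i, hS]
  have h2 : (2 : F) • S = 0 := by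
    have := hA.symm.trans hB
    rw [two_smul]
    linear_combination (norm := abel) -this
  have h2F : (2 : F) ≠ 0 := Ring.two_ne_zero hF
  have : S = 0 := by
    have := congrArg (fun y => (2 : F)⁻¹ • y) h2
    simpa [smul_smul, inv_mul_cancel₀ h2F] using this
  exact this

end SumSqAux

/-- For `n` odd, if `j : L_{n+1} → A` is a linear map into an associative algebra
turning the bracket into the `n`-ary alternating sum, then
`j(e_1)² + ⋯ + j(e_{n+1})² = 0`. -/
theorem sum_of_squares_eq_zero_odd (F : Type) [Field F] (hF : ringChar F ≠ 2)
    (n : ℕ) (hn : 3 ≤ n) (hodd : Odd n)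
    (A : Type) [Ring A] [Algebra F A] (j : (Fin (n + 1) → F) →ₗ[F] A)
    (hj : ∀ z : Fin n → (Fin (n + 1) → F),
      j (simpleBracket F n z) =
        ∑ σ : Equiv.Perm (Fin n),
          (Equiv.Perm.sign σ : ℤ) • (List.ofFn fun k => j (z (σ k))).prod) :
    ∑ i : Fin (n + 1), j (Pi.single i 1) * j (Pi.single i 1) = 0 := by
  apply SumSqAux.aux F hF n hodd A (fun i => j (Pi.single i 1))
  intro i
  have hb : simpleBracket F n (fun k => Pi.single (i.succAbove k) 1)
      = ((-1 : F) ^ (n + (i : ℕ))) • (Pi.single i 1 : Fin (n + 1) → F) := by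
    unfold simpleBracket
    rw [Finset.sum_eq_single i]
    · have hdet : (Matrix.of fun k l : Fin n =>
          (Pi.single (i.succAbove k) 1 : Fin (n + 1) → F) (i.succAbove l)) = 1 := by
        ext k l
        simp [Matrix.one_apply, Pi.single_apply, Fin.succAbove_right_inj, eq_comm]
      rw [hdet, Matrix.det_one, mul_one]
    · intro i' _ hne
      obtain ⟨k₀, hk₀⟩ := Fin.exists_succAbove_eq hne
      have hdet : Matrix.det (Matrix.of fun k l : Fin n =>
          (Pi.single (i.succAbove k) 1 : Fin (n + 1) → F) (i'.succAbove l)) = 0 := by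
        apply Matrix.det_eq_zero_of_row_eq_zero k₀
        intro l
        simp [Matrix.of_apply, hk₀, Pi.single_apply, Fin.succAbove_ne]
      rw [hdet, mul_zero, zero_smul]
    · simp
  have h := hj (fun k => Pi.single (i.succAbove k) 1)
  rw [hb, map_smul] at h
  exact h.symm
end

section
/- Let n ≥ 4 be even, F a field of characteristic ≠ 2, and let I be the ideal of F⟨x_1,...,x_{n+1}⟩ generated by G_i = (-1)^{⌊n/2⌋}(alt(x_1,...,x̂_i,...,x_{n+1}) + (-1)^{n+i} x_i) for 1 ≤ i ≤ n+1. Then I ∩ span_F(x_1,...,x_{n+1}, 1) = {0}; in particular, the images of x_1,...,x_{n+1} in the quotient U = F⟨X⟩/I are linearly independent. -/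
open FreeAlgebra

/-- The `n`-ary alternating sum in an associative algebra. -/
noncomputable def altSum {A : Type} [Ring A] (n : ℕ) (x : Fin n → A) : A :=
  ∑ σ : Equiv.Perm (Fin n), (Equiv.Perm.sign σ : ℤ) • (List.ofFn fun k => x (σ k)).prod

namespace NLie
variable {n : ℕ}

/-- Degree-lex weight of a word over `Fin (n+1)`: base `n+2` value with digits `letter+1`. -/
def phi : List (Fin (n+1)) → ℕ
  | [] => 0
  | a :: u => ((a : ℕ) + 1) * (n + 2) ^ u.length + phi u

@[simp] lemma phi_nil : phi ([] : List (Fin (n+1))) = 0 := rfl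

lemma phi_cons (a : Fin (n+1)) (u : List (Fin (n+1))) :
    phi (a :: u) = ((a : ℕ) + 1) * (n + 2) ^ u.length + phi u := rfl

lemma phi_lt (u : List (Fin (n+1))) : phi u < (n + 2) ^ u.length := by
  induction u with
  | nil => simp
  | cons a u ih =>
    have ha : (a : ℕ) + 1 ≤ n + 1 := by omega
    have h2 : ((a : ℕ) + 1) * (n + 2) ^ u.length ≤ (n + 1) * (n + 2) ^ u.length :=
      Nat.mul_le_mul_right _ ha
    have : (n + 1) * (n + 2) ^ u.length + (n + 2) ^ u.length = (n + 2) ^ (u.length + 1) := by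
      ring
    simp only [phi_cons, List.length_cons]
    omega

lemma pow_le_phi (a : Fin (n+1)) (u : List (Fin (n+1))) :
    (n + 2) ^ u.length ≤ phi (a :: u) := by
  have : 1 * (n + 2) ^ u.length ≤ ((a : ℕ) + 1) * (n + 2) ^ u.length :=
    Nat.mul_le_mul_right _ (by omega)
  simp only [phi_cons]; omega

lemma phi_append (u v : List (Fin (n+1))) :
    phi (u ++ v) = phi u * (n + 2) ^ v.length + phi v := by
  induction u with
  | nil => simp
  | cons a u ih =>
    simp only [List.cons_append, phi_cons, List.length_append, ih]
    ring

lemma length_le_phi (u : List (Fin (n+1))) : u.length ≤ phi u := by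
  induction u with
  | nil => simp
  | cons a u ih =>
    have h1 := pow_le_phi a u
    have h2 : u.length < 2 ^ u.length := Nat.lt_two_pow_self
    have h3 : 2 ^ u.length ≤ (n + 2) ^ u.length :=
      Nat.pow_le_pow_left (by omega) _
    simp only [List.length_cons]; omega

lemma phi_lt_of_length_lt {u v : List (Fin (n+1))} (h : u.length < v.length) :
    phi u < phi v := by
  rcases v with _ | ⟨b, v⟩
  · simp at h
  · have h1 := phi_lt u
    have h2 := pow_le_phi b v
    have h3 : (n + 2) ^ u.length ≤ (n + 2) ^ v.length :=
      Nat.pow_le_pow_right (by omega) (by simpa using Nat.lt_succ_iff.mp (by simpa using h))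
    omega

lemma length_le_of_phi_lt {u v : List (Fin (n+1))} (h : phi u < phi v) :
    u.length ≤ v.length := by
  by_contra hc
  push_neg at hc
  have := phi_lt_of_length_lt hc
  omega

lemma phi_append_lt_right {m m' v : List (Fin (n+1))} (h : phi m < phi m') :
    phi (m ++ v) < phi (m' ++ v) := by
  have hl := length_le_of_phi_lt h
  rw [phi_append, phi_append]
  have : (phi m + 1) * (n + 2) ^ v.length ≤ phi m' * (n + 2) ^ v.length :=
    Nat.mul_le_mul_right _ (by omega)
  nlinarith [phi_lt v, Nat.pow_pos (n := v.length) (show 0 < n + 2 by omega)]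

lemma phi_middle_mono {m m' : List (Fin (n+1))} (u v : List (Fin (n+1)))
    (h : phi m < phi m') : phi (u ++ m ++ v) < phi (u ++ m' ++ v) := by
  have hl := length_le_of_phi_lt h
  have h1 : phi (m ++ v) < phi (m' ++ v) := phi_append_lt_right h
  rw [List.append_assoc, List.append_assoc, phi_append, phi_append u (m' ++ v)]
  have h2 : (n+2) ^ (m ++ v).length ≤ (n+2) ^ (m' ++ v).length := by
    apply Nat.pow_le_pow_right (by omega)
    simp only [List.length_append]; omega
  have := Nat.mul_le_mul_left (phi u) h2
  omega

/-- Lex comparison: same-length tails, smaller head letter. -/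
lemma phi_lex (p : List (Fin (n+1))) {a b : Fin (n+1)} {s t : List (Fin (n+1))}
    (hlen : s.length = t.length) (hab : (a : ℕ) < (b : ℕ)) :
    phi (p ++ a :: s) < phi (p ++ b :: t) := by
  have h1 : phi (a :: s) < phi (b :: t) := by
    have hs : phi s < (n+2) ^ t.length := hlen ▸ phi_lt s
    simp only [phi_cons, hlen]
    have : ((a:ℕ) + 1 + 1) * (n + 2) ^ t.length ≤ ((b:ℕ) + 1) * (n + 2) ^ t.length :=
      Nat.mul_le_mul_right _ (by omega)
    nlinarith
  have h2 := phi_middle_mono (m := a :: s) (m' := b :: t) p [] h1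
  simp only [List.append_nil] at h2
  exact h2




lemma succAbove_val (i : Fin (n+1)) (j : Fin n) :
    ((i.succAbove j) : ℕ) = if (j : ℕ) < (i : ℕ) then (j : ℕ) else (j : ℕ) + 1 := by
  rcases Nat.lt_or_ge (j : ℕ) (i : ℕ) with hc | hc
  · rw [Fin.succAbove_of_castSucc_lt _ _ (by simpa [Fin.lt_def] using hc), if_pos hc]
    rfl
  · rw [Fin.succAbove_of_le_castSucc _ _ (by simpa [Fin.le_def] using hc), if_neg (by omega)]
    rfl

/-- The word `x_{i.succAbove (σ 0)} ⋯ x_{i.succAbove (σ (n-1))}`. -/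
def wrd (i : Fin (n+1)) (σ : Equiv.Perm (Fin n)) : List (Fin (n+1)) :=
  List.ofFn fun k => i.succAbove (σ k)

/-- The leading word of `G i`: the decreasing word on the letters `≠ i`. -/
def w (i : Fin (n+1)) : List (Fin (n+1)) := wrd i Fin.revPerm

/-- The unique overlap word: the full decreasing word on all `n+1` letters. -/
def Om : List (Fin (n+1)) := List.ofFn (fun ℓ : Fin (n+1) => Fin.rev ℓ)

@[simp] lemma length_wrd (i : Fin (n+1)) (σ : Equiv.Perm (Fin n)) : (wrd i σ).length = n := by
  simp [wrd]

@[simp] lemma length_w (i : Fin (n+1)) : (w i).length = n := by simp [w]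

@[simp] lemma length_Om : (Om : List (Fin (n+1))).length = n + 1 := by simp [Om]

lemma getElem_wrd (i : Fin (n+1)) (σ : Equiv.Perm (Fin n)) (k : ℕ) (h : k < n) :
    (wrd i σ)[k]'(by simpa using h) = i.succAbove (σ ⟨k, h⟩) := by
  simp [wrd]

lemma getElem_w (i : Fin (n+1)) (k : ℕ) (h : k < n) :
    (w i)[k]'(by simpa using h) = i.succAbove (Fin.rev ⟨k, h⟩) := by
  simp [w, wrd]

lemma getElem_w_val (i : Fin (n+1)) (k : ℕ) (h : k < n) :
    (((w i)[k]'(by simpa using h) : Fin (n+1)) : ℕ)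
      = if n - 1 - k < (i : ℕ) then n - 1 - k else n - k := by
  rw [getElem_w i k h, succAbove_val]
  simp only [Fin.val_rev, Fin.val_mk]
  rw [show n - (k + 1) = n - 1 - k from by omega]
  split_ifs with hc
  · rfl
  · omega

lemma getElem_Om_val (k : ℕ) (h : k < n + 1) :
    (((Om : List (Fin (n+1)))[k]'(by simpa using h) : Fin (n+1)) : ℕ) = n - k := by
  simp only [Om, List.getElem_ofFn, Fin.val_rev]; omega

lemma mem_w_iff (i j : Fin (n+1)) : j ∈ w i ↔ j ≠ i := by
  constructor
  · intro hmem
    simp only [w, wrd, List.mem_ofFn] at hmem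
    obtain ⟨k, hk⟩ := hmem
    exact hk ▸ Fin.succAbove_ne i _
  · intro hne
    obtain ⟨z, hz⟩ := Fin.exists_succAbove_eq hne
    simp only [w, wrd, List.mem_ofFn]
    exact ⟨Fin.revPerm.symm z, by simpa using hz⟩

lemma w_inj {i j : Fin (n+1)} (h : w i = w j) (hn : 1 ≤ n) : i = j := by
  by_contra hne
  have h1 : i ∈ w j := (mem_w_iff j i).mpr hne
  rw [← h] at h1
  exact (mem_w_iff i i).mp h1 rfl

/-- The decreasing word is the `phi`-largest among all `wrd i σ`. -/
lemma wrd_lt_w (i : Fin (n+1)) {σ : Equiv.Perm (Fin n)} (hσ : σ ≠ Fin.revPerm) :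
    phi (wrd i σ) < phi (w i) := by
  classical
  have hsne : (Finset.univ.filter fun k => σ k ≠ Fin.rev k).Nonempty := by
    by_contra hc
    apply hσ
    ext k : 1
    simp only [Finset.not_nonempty_iff_eq_empty, Finset.filter_eq_empty_iff] at hc
    have := hc (Finset.mem_univ k)
    simpa using this
  set s := Finset.univ.filter fun k => σ k ≠ Fin.rev k with hs
  obtain ⟨k0, hk0mem, hk0min⟩ := s.exists_min_image id hsne
  have hk0 : σ k0 ≠ Fin.rev k0 := by
    have := Finset.mem_filter.mp hk0mem; exact this.2
  have hbefore : ∀ k : Fin n, k < k0 → σ k = Fin.rev k := by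
    intro k hk
    by_contra hc
    have : k0 ≤ k := hk0min k (Finset.mem_filter.mpr ⟨Finset.mem_univ _, hc⟩)
    exact absurd hk (not_lt.mpr this)
  -- key: (σ k0 : ℕ) < (rev k0 : ℕ)
  have hlt : (σ k0 : ℕ) < (Fin.rev k0 : ℕ) := by
    rcases Nat.lt_trichotomy (σ k0 : ℕ) (Fin.rev k0 : ℕ) with h | h | h
    · exact h
    · exact absurd (Fin.ext h) hk0
    · -- σ k0 > n - 1 - k0 : then σ k0 = rev k' = σ k' for some k' < k0
      exfalso
      set k' : Fin n := Fin.rev (σ k0) with hk'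
      have hv : (k' : ℕ) = n - 1 - (σ k0 : ℕ) := by
        rw [hk', Fin.val_rev]; omega
      have hk'lt : k' < k0 := by
        rw [Fin.lt_def, hv]
        have h1 : (Fin.rev k0 : ℕ) = n - 1 - (k0 : ℕ) := by rw [Fin.val_rev]; omega
        have := (σ k0).isLt
        have := k0.isLt
        omega
      have : σ k' = σ k0 := by
        rw [hbefore k' hk'lt, hk', Fin.rev_rev]
      have := σ.injective this
      rw [this] at hk'lt
      exact absurd hk'lt (lt_irrefl _)
  -- now build the lex comparison
  have hmono : i.succAbove (σ k0) < i.succAbove (Fin.rev k0) :=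
    Fin.succAbove_lt_succAbove_iff.mpr (Fin.lt_def.mpr hlt)
  have hk0n : (k0 : ℕ) < n := k0.isLt
  have e1 : wrd i σ = (wrd i σ).take k0 ++
      i.succAbove (σ k0) :: (wrd i σ).drop ((k0 : ℕ) + 1) := by
    conv_lhs => rw [← List.take_append_drop (k0 : ℕ) (wrd i σ)]
    congr 1
    rw [List.drop_eq_getElem_cons (by simpa using hk0n)]
    congr 1
    rw [getElem_wrd i σ k0 hk0n]
  have e2 : w i = (wrd i σ).take k0 ++
      i.succAbove (Fin.rev k0) :: (w i).drop ((k0 : ℕ) + 1) := by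
    conv_lhs => rw [← List.take_append_drop (k0 : ℕ) (w i)]
    congr 1
    · apply List.ext_getElem
      · simp [w]
      · intro j h1 h2
        rw [List.getElem_take, List.getElem_take]
        have hj : j < n := by simp at h1; omega
        have hjk0 : j < (k0 : ℕ) := by simpa using h1
        rw [getElem_wrd i σ j hj, getElem_w i j hj]
        rw [hbefore ⟨j, hj⟩ (by simpa [Fin.lt_def] using hjk0)]
    · rw [List.drop_eq_getElem_cons (by simpa using hk0n)]
      congr 1
      rw [getElem_w i k0 hk0n]
  calc phi (wrd i σ) = phi ((wrd i σ).take k0 ++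
      i.succAbove (σ k0) :: (wrd i σ).drop ((k0 : ℕ) + 1)) := by rw [← e1]
    _ < phi ((wrd i σ).take k0 ++
      i.succAbove (Fin.rev k0) :: (w i).drop ((k0 : ℕ) + 1)) := by
        apply phi_lex
        · simp [w]
        · exact_mod_cast hmono
    _ = phi (w i) := by rw [← e2]

/-- First-difference criterion for `phi` comparison of equal-length words. -/
lemma phi_lt_of_firstdiff {L M : List (Fin (n+1))} (hlen : L.length = M.length)
    (d : ℕ) (hd : d < L.length)
    (hpre : ∀ j (hj : j < d), L[j]'(Nat.lt_trans hj hd) = M[j]'(hlen ▸ Nat.lt_trans hj hd))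
    (hat : ((L[d]'hd : Fin (n+1)) : ℕ) < ((M[d]'(hlen ▸ hd) : Fin (n+1)) : ℕ)) :
    phi L < phi M := by
  have hdM : d < M.length := hlen ▸ hd
  have e1 : L = L.take d ++ L[d]'hd :: L.drop (d + 1) := by
    conv_lhs => rw [← List.take_append_drop d L]
    rw [List.drop_eq_getElem_cons hd]
  have e2 : M = L.take d ++ M[d]'hdM :: M.drop (d + 1) := by
    conv_lhs => rw [← List.take_append_drop d M]
    rw [List.drop_eq_getElem_cons hdM]
    congr 1
    apply List.ext_getElem
    · simp only [List.length_take]; omega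
    · intro j h1 h2
      rw [List.getElem_take, List.getElem_take]
      exact (hpre j (by simp at h2; omega)).symm
  calc phi L = phi (L.take d ++ L[d]'hd :: L.drop (d + 1)) := by rw [← e1]
    _ < phi (L.take d ++ M[d]'hdM :: M.drop (d + 1)) := by
        apply phi_lex
        · simp only [List.length_drop]; omega
        · exact hat
    _ = phi M := by rw [← e2]

lemma Om_eq_right (h1 : 1 ≤ n) : (Om : List (Fin (n+1))) = w 0 ++ [(0 : Fin (n+1))] := by
  apply List.ext_getElem
  · simp
  · intro k hk1 hk2
    apply Fin.ext
    rw [getElem_Om_val k (by simpa using hk1)]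
    rcases Nat.lt_or_ge k n with hkn | hkn
    · rw [List.getElem_append_left (by simpa using hkn)]
      rw [getElem_w_val 0 k hkn]
      simp only [Fin.val_zero]
      simp
    · have hkn' : k = n := by simp at hk1; omega
      subst hkn'
      rw [List.getElem_append_right (by simp)]
      simp

lemma Om_eq_left : (Om : List (Fin (n+1))) = Fin.last n :: w (Fin.last n) := by
  apply List.ext_getElem
  · simp
  · intro k hk1 hk2
    apply Fin.ext
    rw [getElem_Om_val k (by simpa using hk1)]
    rcases k with _ | k
    · simp
    · have hkn : k < n := by simpa using hk1
      rw [List.getElem_cons_succ]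
      rw [getElem_w_val (Fin.last n) k hkn]
      simp only [Fin.val_last]
      rw [if_pos (by omega)]
      omega

lemma getElem?_of_firstdiff_aux {L : List (Fin (n+1))} {j : ℕ} {x : Fin (n+1)}
    (h : L[j]? = some x) (hj : j < L.length) : L[j]'hj = x := by
  rw [List.getElem?_eq_getElem hj] at h
  exact Option.some.inj h

/-- First-difference criterion, `getElem?` version. -/
lemma phi_lt_of_firstdiff' {L M : List (Fin (n+1))} (hlen : L.length = M.length)
    (d : ℕ) (hd : d < L.length)
    (hpre : ∀ j, j < d → L[j]? = M[j]?)
    {a b : Fin (n+1)} (ha : L[d]? = some a) (hb : M[d]? = some b)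
    (hab : (a : ℕ) < (b : ℕ)) : phi L < phi M := by
  apply phi_lt_of_firstdiff hlen d hd
  · intro j hj
    have h1 : L[j]? = M[j]? := hpre j hj
    rw [List.getElem?_eq_getElem (Nat.lt_trans hj hd),
      List.getElem?_eq_getElem (hlen ▸ Nat.lt_trans hj hd)] at h1
    exact Option.some.inj h1
  · rw [getElem?_of_firstdiff_aux ha hd, getElem?_of_firstdiff_aux hb (hlen ▸ hd)]
    exact hab

lemma getElem?_w (i : Fin (n+1)) (k : ℕ) (h : k < n) :
    (w i)[k]? = some ((w i)[k]'(by simpa using h)) :=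
  List.getElem?_eq_getElem (by simpa using h)

lemma getElem?_Om (k : ℕ) (h : k < n + 1) :
    (Om : List (Fin (n+1)))[k]? = some ((Om : List (Fin (n+1)))[k]'(by simpa using h)) :=
  List.getElem?_eq_getElem (by simpa using h)

/-- For `i ≠ 0`, the word `w i ++ [i]` is `phi`-smaller than `Om`. -/
lemma cmp1 {i : Fin (n+1)} (hi : (i : ℕ) ≠ 0) (hn1 : 1 ≤ n) :
    phi (w i ++ [i]) < phi (Om : List (Fin (n+1))) := by
  have hlen : (w i ++ [i]).length = (Om : List (Fin (n+1))).length := by simp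
  have hii := i.isLt
  set d : ℕ := n - (i : ℕ) with hd
  have hdn : d < n := by omega
  refine phi_lt_of_firstdiff' hlen d (by simp; omega)
    (a := (w i)[d]'(by simpa using hdn)) (b := (Om : List (Fin (n+1)))[d]'(by simp; omega))
    (fun j hj => ?_) ?_ ?_ ?_
  · have hjn : j < n := by omega
    rw [List.getElem?_append_left (by simpa using hjn), getElem?_w i j hjn,
      getElem?_Om j (by omega)]
    congr 1
    apply Fin.ext
    rw [getElem_w_val i j hjn, getElem_Om_val j (by omega), if_neg (by omega)]
  · rw [List.getElem?_append_left (by simpa using hdn)]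
    exact getElem?_w i d hdn
  · exact getElem?_Om d (by omega)
  · rw [getElem_w_val i d hdn, getElem_Om_val d (by omega), if_pos (by omega)]
    omega

/-- For `i < n`, the word `[i] ++ w i` is `phi`-smaller than `Om`. -/
lemma cmp2 {i : Fin (n+1)} (hi : (i : ℕ) < n) :
    phi (i :: w i) < phi (Om : List (Fin (n+1))) := by
  have hlen : (i :: w i).length = (Om : List (Fin (n+1))).length := by simp
  refine phi_lt_of_firstdiff' hlen 0 (by simp)
    (a := i) (b := (Om : List (Fin (n+1)))[0]'(by simp))
    (fun j hj => absurd hj (by omega)) (by simp) (getElem?_Om 0 (by omega)) ?_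
  rw [getElem_Om_val 0 (by omega)]
  simpa using hi

/-- The only overlap between leading words: `w k` then `w i` shifted by `d ∈ [1, n-1]`
forces `k = 0`, `i = n`, `d = 1`. -/
lemma overlap {k i : Fin (n+1)} {v e v' : List (Fin (n+1))} (hn4 : 4 ≤ n)
    (heq : w k ++ v = e ++ (w i ++ v')) (he1 : 1 ≤ e.length) (he2 : e.length ≤ n - 1) :
    (k : ℕ) = 0 ∧ (i : ℕ) = n ∧ e.length = 1 := by
  have hik := i.isLt
  have hkk := k.isLt
  have key : ∀ (jj : ℕ) (_ : e.length ≤ jj) (h2 : jj < n) (h3 : jj - e.length < n),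
      (((w k)[jj]'(by simpa using h2) : Fin (n+1)) : ℕ)
        = (((w i)[jj - e.length]'(by simpa using h3) : Fin (n+1)) : ℕ) := by
    intro jj h1 h2 h3
    have hh := congrArg (fun l => l[jj]?) heq
    rw [List.getElem?_append_left (by simpa using h2),
      List.getElem?_append_right (by omega),
      List.getElem?_append_left (by simpa using h3),
      getElem?_w k jj h2, getElem?_w i (jj - e.length) h3] at hh
    exact congrArg Fin.val (Option.some.inj hh)
  -- position jj = e.length
  have h0 := key e.length (le_refl _) (by omega) (by omega)
  rw [getElem_w_val k e.length (by omega), getElem_w_val i (e.length - e.length) (by omega)] at h0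
  have hd1 : e.length = 1 ∧ (i : ℕ) = n ∧ (k : ℕ) ≤ n - 2 := by
    split_ifs at h0 <;> omega
  -- position jj = n - 1
  have h9 := key (n - 1) (by omega) (by omega) (by omega)
  rw [getElem_w_val k (n-1) (by omega), getElem_w_val i (n - 1 - e.length) (by omega)] at h9
  obtain ⟨he1', hi2, hk2⟩ := hd1
  refine ⟨?_, hi2, he1'⟩
  split_ifs at h9 <;> omega

lemma surg {a b c d : List (Fin (n+1))} (h : a ++ b = c ++ d) (hl : a.length ≤ c.length) :
    ∃ e, c = a ++ e ∧ b = e ++ d := by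
  rcases List.append_eq_append_iff.mp h with ⟨e, he1, he2⟩ | ⟨e, he1, he2⟩
  · exact ⟨e, he1, he2⟩
  · have hlen := congrArg List.length he1
    simp only [List.length_append] at hlen
    have : e = [] := List.eq_nil_of_length_eq_zero (by omega)
    subst this
    refine ⟨[], by simpa using he1.symm, ?_⟩
    simp only [List.append_nil] at he1
    subst he1
    simpa using (List.append_cancel_left h)

lemma canu {u v u2 v2 : List (Fin (n+1))} {i i2 : Fin (n+1)} (hn1 : 1 ≤ n)
    (h : u ++ (w i ++ v) = u2 ++ (w i2 ++ v2)) (hlen : u.length = u2.length) :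
    u = u2 ∧ i = i2 ∧ v = v2 := by
  obtain ⟨h1, h2⟩ := List.append_inj h hlen
  obtain ⟨h3, h4⟩ := List.append_inj h2 (by simp)
  exact ⟨h1, w_inj h3 hn1, h4⟩

section Core

variable {F : Type} [Field F]

/-- The basis word `x_{m_1} ⋯ x_{m_l}` in the monoid algebra. -/
noncomputable def sw (F : Type) [Field F] {n : ℕ} (m : List (Fin (n+1))) :
    MonoidAlgebra F (FreeMonoid (Fin (n+1))) :=
  MonoidAlgebra.single (FreeMonoid.ofList m) 1

lemma sw_mul {n : ℕ} (u v : List (Fin (n+1))) : sw F u * sw F v = sw F (u ++ v) := by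
  rw [sw, sw, sw, MonoidAlgebra.single_mul_single, one_mul, FreeMonoid.ofList_append]

lemma sw_nil : sw F ([] : List (Fin (n+1))) = 1 := rfl

/-- Span of words of `phi`-value `< b`. -/
noncomputable def lowSpan (F : Type) [Field F] {n : ℕ} (b : ℕ) :
    Submodule F (MonoidAlgebra F (FreeMonoid (Fin (n+1)))) :=
  Submodule.span F {x | ∃ m', phi m' < b ∧ x = sw F m'}

/-- `(u, i, v)` is the leftmost occurrence of a leading word in `u ++ w i ++ v`. -/
def canonical {n : ℕ} (u : List (Fin (n+1))) (i : Fin (n+1)) (v : List (Fin (n+1))) : Prop :=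
  ∀ (u' : List (Fin (n+1))) (k : Fin (n+1)) (v' : List (Fin (n+1))),
    u ++ (w i ++ v) = u' ++ (w k ++ v') → u.length ≤ u'.length

/-- The span of the canonical products `u * g i * v`. -/
noncomputable def SS (F : Type) [Field F] {n : ℕ} (g : Fin (n+1) → MonoidAlgebra F (FreeMonoid (Fin (n+1)))) :
    Submodule F (MonoidAlgebra F (FreeMonoid (Fin (n+1)))) :=
  Submodule.span F {x | ∃ u i v, canonical u i v ∧ x = sw F u * g i * sw F v}

lemma lowSpan_mul_mem {n : ℕ} {b : ℕ} {t : MonoidAlgebra F (FreeMonoid (Fin (n+1)))}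
    (ht : t ∈ lowSpan F b) (P : Submodule F (MonoidAlgebra F (FreeMonoid (Fin (n+1)))))
    (y z : MonoidAlgebra F (FreeMonoid (Fin (n+1))))
    (hgen : ∀ m', phi m' < b → y * sw F m' * z ∈ P) :
    y * t * z ∈ P := by
  refine Submodule.span_induction (p := fun x _ => y * x * z ∈ P)
    (fun x hx => ?_) (by simp) (fun a b _ _ ha hb => ?_) (fun c a _ ha => ?_) ht
  · obtain ⟨m', hm', rfl⟩ := hx
    exact hgen m' hm'
  · show y * (a + b) * z ∈ P
    rw [mul_add, add_mul]; exact add_mem ha hb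
  · show y * (c • a) * z ∈ P
    rw [mul_smul_comm, smul_mul_assoc]; exact Submodule.smul_mem _ _ ha

lemma triple_len {n : ℕ} (hn1 : 1 ≤ n) (u : List (Fin (n+1))) (i : Fin (n+1))
    (v : List (Fin (n+1))) : u.length < phi (u ++ (w i ++ v)) := by
  have h1 : (u ++ (w i ++ v)).length = u.length + (n + v.length) := by simp
  have h2 := length_le_phi (u ++ (w i ++ v))
  omega

lemma meas_lt {n : ℕ} (hn1 : 1 ≤ n) {m' : ℕ} {m : ℕ} (h : m' < m)
    (u1len : ℕ) (hu1 : u1len < m') (x : ℕ) : m' ^ 2 + u1len < m ^ 2 + x := by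
  have h1 : m' ^ 2 + u1len < (m' + 1) ^ 2 := by nlinarith
  have h2 : (m' + 1) ^ 2 ≤ m ^ 2 := Nat.pow_le_pow_left (by omega) 2
  omega

theorem L1 {n : ℕ} (hn4 : 4 ≤ n)
    {g : Fin (n+1) → MonoidAlgebra F (FreeMonoid (Fin (n+1)))}
    (hdec : ∀ i, g i - sw F (w i) ∈ lowSpan F (phi (w i)))
    (hstar : sw F [Fin.last n] * g (Fin.last n) = g (Fin.last n) * sw F [Fin.last n]
      + ∑ j : Fin n, ((-1 : F) ^ ((j : ℕ) + 1)) •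
          (sw F [Fin.castSucc j] * g (Fin.castSucc j)
            - g (Fin.castSucc j) * sw F [Fin.castSucc j])) :
    ∀ (u : List (Fin (n+1))) (i : Fin (n+1)) (v : List (Fin (n+1))),
      sw F u * g i * sw F v ∈ SS F g := by
  suffices H : ∀ (μ : ℕ) (u : List (Fin (n+1))) (i : Fin (n+1)) (v : List (Fin (n+1))),
      (phi (u ++ (w i ++ v)))^2 + u.length ≤ μ → sw F u * g i * sw F v ∈ SS F g by
    exact fun u i v => H _ u i v (le_refl _)
  intro μ
  induction μ with
  | zero =>
    intro u i v h
    exfalso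
    have h1 := triple_len (by omega : 1 ≤ n) u i v
    have h2 : 1 ≤ (phi (u ++ (w i ++ v)))^2 := Nat.one_le_pow _ _ (by omega)
    omega
  | succ μ IH =>
    intro u i v hμ
    by_cases hle : (phi (u ++ (w i ++ v)))^2 + u.length ≤ μ
    · exact IH u i v hle
    -- leftmost-occurrence case split
    by_cases hcan : canonical u i v
    · exact Submodule.subset_span ⟨u, i, v, hcan, rfl⟩
    rw [canonical] at hcan
    push_neg at hcan
    obtain ⟨u', k, v', heq, hlt⟩ := hcan
    obtain ⟨e, hu, hrest⟩ := surg heq.symm (le_of_lt hlt)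
    have hel : 1 ≤ e.length := by
      have := congrArg List.length hu
      simp only [List.length_append] at this
      omega
    -- convenient: the measure of any triple with strictly smaller phi is ≤ μ
    have callφ : ∀ (u1 : List (Fin (n+1))) (i1 : Fin (n+1)) (v1 : List (Fin (n+1))),
        phi (u1 ++ (w i1 ++ v1)) < phi (u ++ (w i ++ v)) →
        sw F u1 * g i1 * sw F v1 ∈ SS F g := by
      intro u1 i1 v1 hphi
      refine IH u1 i1 v1 (by
        have h1 := triple_len (by omega : 1 ≤ n) u1 i1 v1
        have := meas_lt (by omega : 1 ≤ n) hphi u1.length h1 u.length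
        omega)
    have callpos : ∀ (u1 : List (Fin (n+1))) (i1 : Fin (n+1)) (v1 : List (Fin (n+1))),
        phi (u1 ++ (w i1 ++ v1)) = phi (u ++ (w i ++ v)) → u1.length < u.length →
        sw F u1 * g i1 * sw F v1 ∈ SS F g := by
      intro u1 i1 v1 hphi hlen
      exact IH u1 i1 v1 (by rw [hphi]; omega)
    rcases Nat.lt_or_ge e.length n with hcase | hcase
    · -- overlap case
      obtain ⟨hk0, hin, he1⟩ := overlap hn4 hrest hel (by omega)
      -- e is a single letter, equal to `Fin.last n`
      obtain ⟨a, e', he⟩ : ∃ a e', e = a :: e' := by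
        rcases e with _ | ⟨a, e'⟩
        · simp at hel
        · exact ⟨a, e', rfl⟩
      have he'nil : e' = [] := by
        have := congrArg List.length he
        simp only [he1, List.length_cons] at this
        exact List.eq_nil_of_length_eq_zero (by omega)
      subst he'nil
      -- the letter `a` is `Fin.last n`
      have ha : a = Fin.last n := by
        have hh := congrArg (fun l => l[0]?) hrest
        rw [List.getElem?_append_left (by simp; omega), getElem?_w k 0 (by omega), he] at hh
        simp only [List.cons_append, List.getElem?_cons_zero] at hh
        have := Option.some.inj hh
        apply Fin.ext
        rw [← this, getElem_w_val k 0 (by omega), if_neg (by omega), Fin.val_last]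
        omega
      have hil : i = Fin.last n := Fin.ext (by rw [Fin.val_last]; exact hin)
      have hu3 : u = u' ++ [Fin.last n] := by rw [hu, he, ha]
      -- value of the full word
      have e4 : u ++ (w i ++ v) = (u' ++ Om) ++ v := by
        rw [hu3, hil, Om_eq_left]
        simp [List.append_assoc]
      -- rewrite to `u' ⬝ (x_lst * g_lst) ⬝ v` and use the master identity
      have main : sw F u * g i * sw F v
          = sw F u' * (sw F [Fin.last n] * g (Fin.last n)) * sw F v := by
        rw [hu3, hil, ← sw_mul]
        simp only [mul_assoc]
      rw [main, hstar, mul_add, add_mul]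
      apply add_mem
      · -- the term g_lst * x_lst
        have hform : sw F u' * (g (Fin.last n) * sw F [Fin.last n]) * sw F v
            = sw F u' * g (Fin.last n) * sw F (Fin.last n :: v) := by
          have hsw : sw F (Fin.last n :: v) = sw F [Fin.last n] * sw F v := by
            rw [sw_mul, List.singleton_append]
          rw [hsw]
          simp only [mul_assoc]
        rw [hform]
        apply callφ
        have e3 : u' ++ (w (Fin.last n) ++ (Fin.last n :: v))
            = (u' ++ (w (Fin.last n) ++ [Fin.last n])) ++ v := by
          simp [List.append_assoc]
        rw [e3, e4]
        exact phi_middle_mono u' v (cmp1 (by rw [Fin.val_last]; omega) (by omega))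
      · -- the sum over j
        rw [Finset.mul_sum, Finset.sum_mul]
        apply Submodule.sum_mem
        intro j _
        rw [mul_smul_comm, smul_mul_assoc]
        apply Submodule.smul_mem
        rw [mul_sub, sub_mul]
        apply sub_mem
        · -- x_j * g_j term
          have hform : sw F u' * (sw F [Fin.castSucc j] * g (Fin.castSucc j)) * sw F v
              = sw F (u' ++ [Fin.castSucc j]) * g (Fin.castSucc j) * sw F v := by
            rw [← sw_mul]
            simp only [mul_assoc]
          rw [hform]
          apply callφ
          have e3 : (u' ++ [Fin.castSucc j]) ++ (w (Fin.castSucc j) ++ v)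
              = (u' ++ (Fin.castSucc j :: w (Fin.castSucc j))) ++ v := by
            simp [List.append_assoc]
          rw [e3, e4]
          exact phi_middle_mono u' v (cmp2 (by rw [Fin.coe_castSucc]; exact j.isLt))
        · -- g_j * x_j term
          have hform : sw F u' * (g (Fin.castSucc j) * sw F [Fin.castSucc j]) * sw F v
              = sw F u' * g (Fin.castSucc j) * sw F (Fin.castSucc j :: v) := by
            have hsw : sw F (Fin.castSucc j :: v) = sw F [Fin.castSucc j] * sw F v := by
              rw [sw_mul, List.singleton_append]
            rw [hsw]
            simp only [mul_assoc]
          rw [hform]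
          by_cases hz : (Fin.castSucc j : ℕ) = 0
          · -- the same word, occurrence strictly to the left
            have hz0 : Fin.castSucc j = (0 : Fin (n+1)) := Fin.ext (by simpa using hz)
            apply callpos
            · congr 1
              rw [hz0, e4, Om_eq_right (by omega)]
              simp [List.append_assoc]
            · rw [hu3]
              simp
          · apply callφ
            have e3 : u' ++ (w (Fin.castSucc j) ++ (Fin.castSucc j :: v))
                = (u' ++ (w (Fin.castSucc j) ++ [Fin.castSucc j])) ++ v := by
              simp [List.append_assoc]
            rw [e3, e4]
            exact phi_middle_mono u' v (cmp1 hz (by omega))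
    · -- disjoint case
      obtain ⟨e2, her, hv'⟩ := surg hrest (by simpa using hcase)
      -- u = u' ++ (w k ++ e2)
      have hu2 : u = u' ++ (w k ++ e2) := by rw [hu, her]
      -- the three memberships
      have h1 : sw F u' * g k * sw F (e2 ++ (w i ++ v)) ∈ SS F g := by
        apply callpos u' k (e2 ++ (w i ++ v))
        · congr 1
          rw [hu2]
          simp [List.append_assoc]
        · omega
      have h2 : (sw F u' * g k * sw F e2) * (g i - sw F (w i)) * sw F v ∈ SS F g := by
        apply lowSpan_mul_mem (hdec i)
        intro m' hm'
        have hform : (sw F u' * g k * sw F e2) * sw F m' * sw F v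
            = sw F u' * g k * sw F ((e2 ++ m') ++ v) := by
          rw [← sw_mul, ← sw_mul]
          simp only [mul_assoc]
        rw [hform]
        apply callφ
        have e3 : u' ++ (w k ++ ((e2 ++ m') ++ v)) = ((u' ++ w k) ++ e2) ++ m' ++ v := by
          simp [List.append_assoc]
        have e4 : u ++ (w i ++ v) = ((u' ++ w k) ++ e2) ++ w i ++ v := by
          rw [hu2]; simp [List.append_assoc]
        rw [e3, e4]
        exact phi_middle_mono _ _ hm'
      have h3 : sw F u' * (g k - sw F (w k)) * ((sw F e2 * g i) * sw F v) ∈ SS F g := by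
        apply lowSpan_mul_mem (hdec k)
        intro m'' hm''
        have hform : sw F u' * sw F m'' * ((sw F e2 * g i) * sw F v)
            = sw F ((u' ++ m'') ++ e2) * g i * sw F v := by
          rw [← sw_mul, ← sw_mul]
          simp only [mul_assoc]
        rw [hform]
        apply callφ
        have e3 : ((u' ++ m'') ++ e2) ++ (w i ++ v) = u' ++ m'' ++ (e2 ++ w i ++ v) := by
          simp [List.append_assoc]
        have e4 : u ++ (w i ++ v) = u' ++ w k ++ (e2 ++ w i ++ v) := by
          rw [hu2]; simp [List.append_assoc]
        rw [e3, e4]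
        exact phi_middle_mono _ _ hm''
      have main : sw F u * g i * sw F v
          = (sw F u' * g k * sw F (e2 ++ (w i ++ v))
              + (sw F u' * g k * sw F e2) * (g i - sw F (w i)) * sw F v)
            - sw F u' * (g k - sw F (w k)) * ((sw F e2 * g i) * sw F v) := by
        rw [hu2]
        simp only [← sw_mul]
        noncomm_ring
      rw [main]
      exact sub_mem (add_mem h1 h2) h3

/-- Coefficient of the word `m`. -/
noncomputable def co {n : ℕ} (m : List (Fin (n+1)))
    (x : MonoidAlgebra F (FreeMonoid (Fin (n+1)))) : F :=
  x.coeff (FreeMonoid.ofList m)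

lemma co_add {n : ℕ} (m : List (Fin (n+1))) (x y : MonoidAlgebra F (FreeMonoid (Fin (n+1)))) :
    co m (x + y) = co m x + co m y := rfl

lemma co_smul {n : ℕ} (m : List (Fin (n+1))) (c : F)
    (x : MonoidAlgebra F (FreeMonoid (Fin (n+1)))) : co m (c • x) = c * co m x := rfl

lemma co_zero {n : ℕ} (m : List (Fin (n+1))) :
    co (F := F) m 0 = 0 := rfl

lemma co_sw {n : ℕ} (m m' : List (Fin (n+1))) :
    co (F := F) m (sw F m') = if m' = m then 1 else 0 := by
  classical
  by_cases h : m' = m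
  · subst h
    rw [co, sw, MonoidAlgebra.single_apply, if_pos rfl, if_pos rfl]
  · rw [co, sw, MonoidAlgebra.single_apply,
      if_neg (fun hh => h (FreeMonoid.ofList.injective hh)), if_neg h]

lemma low_co {n : ℕ} {b : ℕ} {t : MonoidAlgebra F (FreeMonoid (Fin (n+1)))}
    (ht : t ∈ lowSpan F b) (u v m'' : List (Fin (n+1)))
    (h : co m'' (sw F u * t * sw F v) ≠ 0) :
    ∃ m', phi m' < b ∧ m'' = (u ++ m') ++ v := by
  refine Submodule.span_induction
    (p := fun x _ => co m'' (sw F u * x * sw F v) ≠ 0 → ∃ m', phi m' < b ∧ m'' = (u ++ m') ++ v)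
    (fun x hx => ?_)
    (fun hc => absurd (show co m'' (sw F u * 0 * sw F v) = 0 by rw [mul_zero, zero_mul]; rfl) hc)
    (fun a b _ _ ha hb hc => ?_) (fun c a _ ha hc => ?_) ht h
  · obtain ⟨m', hm', rfl⟩ := hx
    intro hco
    refine ⟨m', hm', ?_⟩
    rw [sw_mul, sw_mul, co_sw] at hco
    by_contra hne
    exact hco (if_neg (fun hh => hne hh.symm))
  · rw [mul_add, add_mul, co_add] at hc
    rcases (by by_contra hcc; push_neg at hcc; rw [hcc.1, hcc.2] at hc; simp at hc :
      co m'' (sw F u * a * sw F v) ≠ 0 ∨ co m'' (sw F u * b * sw F v) ≠ 0) with h1 | h1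
    · exact ha h1
    · exact hb h1
  · rw [mul_smul_comm, smul_mul_assoc, co_smul] at hc
    exact ha fun hcc => hc (by rw [hcc, mul_zero])

lemma g_split {n : ℕ} {g : Fin (n+1) → MonoidAlgebra F (FreeMonoid (Fin (n+1)))}
    (u v : List (Fin (n+1))) (i : Fin (n+1)) :
    sw F u * g i * sw F v
      = sw F ((u ++ w i) ++ v) + sw F u * (g i - sw F (w i)) * sw F v := by
  simp only [← sw_mul]
  noncomm_ring

lemma co_triple_self {n : ℕ} {g : Fin (n+1) → MonoidAlgebra F (FreeMonoid (Fin (n+1)))}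
    (hdec : ∀ i, g i - sw F (w i) ∈ lowSpan F (phi (w i)))
    (u : List (Fin (n+1))) (i : Fin (n+1)) (v : List (Fin (n+1))) :
    co (u ++ (w i ++ v)) (sw F u * g i * sw F v) = 1 := by
  rw [g_split, co_add, co_sw, if_pos (by simp [List.append_assoc])]
  have hlow : co (u ++ (w i ++ v)) (sw F u * (g i - sw F (w i)) * sw F v) = 0 := by
    by_contra hc
    obtain ⟨m', hm', heq⟩ := low_co (hdec i) u v _ hc
    have h1 : phi ((u ++ m') ++ v) < phi ((u ++ w i) ++ v) := phi_middle_mono u v hm'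
    rw [← heq] at h1
    have : u ++ (w i ++ v) = (u ++ w i) ++ v := by simp [List.append_assoc]
    rw [this] at h1
    exact absurd h1 (lt_irrefl _)
  rw [hlow, add_zero]

lemma co_triple_bound {n : ℕ} {g : Fin (n+1) → MonoidAlgebra F (FreeMonoid (Fin (n+1)))}
    (hdec : ∀ i, g i - sw F (w i) ∈ lowSpan F (phi (w i)))
    (u : List (Fin (n+1))) (i : Fin (n+1)) (v m'' : List (Fin (n+1)))
    (h : co m'' (sw F u * g i * sw F v) ≠ 0) :
    m'' = u ++ (w i ++ v) ∨ phi m'' < phi (u ++ (w i ++ v)) := by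
  rw [g_split, co_add] at h
  rcases (by by_contra hcc; push_neg at hcc; rw [hcc.1, hcc.2] at h; simp at h :
      co m'' (sw F ((u ++ w i) ++ v)) ≠ 0
        ∨ co m'' (sw F u * (g i - sw F (w i)) * sw F v) ≠ 0) with h1 | h1
  · left
    rw [co_sw] at h1
    by_cases he : (u ++ w i) ++ v = m''
    · rw [← he]; simp [List.append_assoc]
    · exact absurd (if_neg he) h1
  · right
    obtain ⟨m', hm', heq⟩ := low_co (hdec i) u v _ h1
    have h2 : phi ((u ++ m') ++ v) < phi ((u ++ w i) ++ v) := phi_middle_mono u v hm'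
    rw [← heq] at h2
    have : u ++ (w i ++ v) = (u ++ w i) ++ v := by simp [List.append_assoc]
    rw [this]
    exact h2

/-- The key triangularity statement: an element of `SS g` supported on words of
length `≤ 1` is zero. -/
theorem L2 {n : ℕ} (hn4 : 4 ≤ n) {g : Fin (n+1) → MonoidAlgebra F (FreeMonoid (Fin (n+1)))}
    (hdec : ∀ i, g i - sw F (w i) ∈ lowSpan F (phi (w i)))
    {z : MonoidAlgebra F (FreeMonoid (Fin (n+1)))} (hz : z ∈ SS F g)
    (hshort : ∀ m'', co m'' z ≠ 0 → m''.length ≤ 1) : z = 0 := by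
  classical
  rw [SS] at hz
  obtain ⟨c, hsupp, hsum⟩ := Submodule.mem_span_set.mp hz
  by_contra hz0
  have hcne : c ≠ 0 := by
    rintro rfl
    rw [Finsupp.sum_zero_index] at hsum
    exact hz0 hsum.symm
  have hcsupp : c.support.Nonempty := Finsupp.support_nonempty_iff.mpr hcne
  have hex : ∀ x ∈ c.support, ∃ u i v, canonical u i v ∧ x = sw F u * g i * sw F v :=
    fun x hx => hsupp hx
  choose! U I V hcanx hxeq using hex
  obtain ⟨x0, hx0, hmax⟩ := Finset.exists_max_image c.support
    (fun x => phi (U x ++ (w (I x) ++ V x))) hcsupp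
  set m0 : List (Fin (n+1)) := U x0 ++ (w (I x0) ++ V x0) with hm0
  -- coefficient of m0 in z equals c x0 ≠ 0
  have hco : co m0 z = c x0 := by
    rw [← hsum]
    rw [Finsupp.sum]
    have : co m0 (∑ x ∈ c.support, c x • x) = ∑ x ∈ c.support, c x * co m0 x := by
      rw [co]
      rw [MonoidAlgebra.coeff_sum, Finsupp.finset_sum_apply]
      apply Finset.sum_congr rfl
      intro x _
      rfl
    rw [this]
    rw [Finset.sum_eq_single x0]
    · rw [hxeq x0 hx0, co_triple_self hdec, mul_one]
    · intro x hx hne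
      rcases eq_or_ne (co m0 x) 0 with hc0 | hc0
      · rw [hc0, mul_zero]
      · exfalso
        rw [hxeq x hx] at hc0
        rcases co_triple_bound hdec _ _ _ _ hc0 with hcase | hcase
        · -- same word: canonical uniqueness forces x = x0
          rw [hm0] at hcase
          have hle1 : (U x).length ≤ (U x0).length :=
            hcanx x hx (U x0) (I x0) (V x0) hcase.symm
          have hle2 : (U x0).length ≤ (U x).length :=
            hcanx x0 hx0 (U x) (I x) (V x) hcase
          obtain ⟨h1, h2, h3⟩ := canu (by omega) hcase (by omega)
          apply hne
          rw [hxeq x hx, hxeq x0 hx0, ← h1, ← h2, ← h3]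
        · have hmx := hmax x hx
          omega
    · intro hx0'
      exact absurd hx0 hx0'
  have hc0ne : c x0 ≠ 0 := Finsupp.mem_support_iff.mp hx0
  have hlen : m0.length ≤ 1 := hshort m0 (by rw [hco]; exact hc0ne)
  rw [hm0] at hlen
  simp only [List.length_append, length_w] at hlen
  omega

/-- `SS g` absorbs arbitrary two-sided multiplication: it contains every `a * g i * b`. -/
theorem ideal_sub {n : ℕ} (hn4 : 4 ≤ n)
    {g : Fin (n+1) → MonoidAlgebra F (FreeMonoid (Fin (n+1)))}
    (hdec : ∀ i, g i - sw F (w i) ∈ lowSpan F (phi (w i)))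
    (hstar : sw F [Fin.last n] * g (Fin.last n) = g (Fin.last n) * sw F [Fin.last n]
      + ∑ j : Fin n, ((-1 : F) ^ ((j : ℕ) + 1)) •
          (sw F [Fin.castSucc j] * g (Fin.castSucc j)
            - g (Fin.castSucc j) * sw F [Fin.castSucc j]))
    (a : MonoidAlgebra F (FreeMonoid (Fin (n+1)))) (i : Fin (n+1))
    (b : MonoidAlgebra F (FreeMonoid (Fin (n+1)))) :
    a * g i * b ∈ SS F g := by
  induction a using MonoidAlgebra.induction_on with
  | of u =>
    induction b using MonoidAlgebra.induction_on with
    | of v =>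
      have h1 : MonoidAlgebra.of F (FreeMonoid (Fin (n+1))) u = sw F (FreeMonoid.toList u) := by
        rw [sw]; rfl
      have h2 : MonoidAlgebra.of F (FreeMonoid (Fin (n+1))) v = sw F (FreeMonoid.toList v) := by
        rw [sw]; rfl
      rw [h1, h2]
      exact L1 hn4 hdec hstar _ i _
    | add x y hx hy =>
      rw [mul_add]
      exact add_mem hx hy
    | smul c x hx =>
      rw [mul_smul_comm]
      exact Submodule.smul_mem _ _ hx
  | add x y hx hy =>
    rw [add_mul, add_mul]
    exact add_mem hx hy
  | smul c x hx =>
    rw [smul_mul_assoc, smul_mul_assoc]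
    exact Submodule.smul_mem _ _ hx

section Perms

variable {n : ℕ}

/-- The permutation `0 ↦ i`, `k+1 ↦ i.succAbove (σ k)`. -/
def P (i : Fin (n+1)) (σ : Equiv.Perm (Fin n)) : Equiv.Perm (Fin (n+1)) :=
  (finSuccEquiv n).trans ((Equiv.optionCongr σ).trans (finSuccEquiv' i).symm)

@[simp] lemma P_zero (i : Fin (n+1)) (σ : Equiv.Perm (Fin n)) : P i σ 0 = i := by
  simp [P]

@[simp] lemma P_succ (i : Fin (n+1)) (σ : Equiv.Perm (Fin n)) (k : Fin n) :
    P i σ k.succ = i.succAbove (σ k) := by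
  simp [P]

lemma P_mul (i : Fin (n+1)) (σ : Equiv.Perm (Fin n)) : P i σ = P i 1 * P 0 σ := by
  apply Equiv.ext
  intro x
  induction x using Fin.cases with
  | zero => simp [Equiv.Perm.mul_apply]
  | succ k =>
    rw [Equiv.Perm.mul_apply, P_succ, P_succ, Fin.zero_succAbove, P_succ]
    simp

lemma P_zero_eq (σ : Equiv.Perm (Fin n)) :
    P (0 : Fin (n+1)) σ = Equiv.Perm.decomposeFin.symm (0, σ) := by
  apply Equiv.ext
  intro x
  induction x using Fin.cases with
  | zero => simp [Equiv.Perm.decomposeFin_symm_apply_zero]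
  | succ k => simp [Equiv.Perm.decomposeFin_symm_apply_succ, Fin.zero_succAbove]

lemma P_one_eq (i : Fin (n+1)) : P i 1 = (Fin.cycleRange i).symm := by
  apply Equiv.ext
  intro x
  induction x using Fin.cases with
  | zero => simp [Fin.cycleRange_symm_zero]
  | succ k => simp [Fin.cycleRange_symm_succ]

lemma sign_P (i : Fin (n+1)) (σ : Equiv.Perm (Fin n)) :
    Equiv.Perm.sign (P i σ) = (-1) ^ (i : ℕ) * Equiv.Perm.sign σ := by
  rw [P_mul, map_mul, P_one_eq, P_zero_eq, Equiv.Perm.sign_symm, Fin.sign_cycleRange,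
    Equiv.Perm.decomposeFin.symm_sign, if_pos rfl, one_mul]

lemma P_bijective :
    Function.Bijective (fun p : Fin (n+1) × Equiv.Perm (Fin n) => P p.1 p.2) := by
  rw [Fintype.bijective_iff_injective_and_card]
  constructor
  · intro p q h
    have h0 : p.1 = q.1 := by
      have := congrArg (fun τ : Equiv.Perm (Fin (n+1)) => τ 0) h
      simpa using this
    have h1 : p.2 = q.2 := by
      apply Equiv.ext
      intro k
      have := congrArg (fun τ : Equiv.Perm (Fin (n+1)) => τ k.succ) h
      simp only [P_succ, h0] at this
      exact Fin.succAbove_right_injective this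
    exact Prod.ext h0 h1
  · simp [Fintype.card_perm, Nat.factorial_succ]

end Perms

section AltSums

variable {F : Type} [Field F] {n : ℕ}

/-- The transported alternating sum `alt(x_{i.succAbove ⬝})`. -/
noncomputable def altW (F : Type) [Field F] {n : ℕ} (i : Fin (n+1)) :
    MonoidAlgebra F (FreeMonoid (Fin (n+1))) :=
  ∑ σ : Equiv.Perm (Fin n), (Equiv.Perm.sign σ : ℤ) • sw F (wrd i σ)

/-- The full alternating sum on all `n+1` generators. -/
noncomputable def ALT (F : Type) [Field F] (n : ℕ) :
    MonoidAlgebra F (FreeMonoid (Fin (n+1))) :=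
  ∑ τ : Equiv.Perm (Fin (n+1)), (Equiv.Perm.sign τ : ℤ) • sw F (List.ofFn fun k => τ k)

lemma ALT_left : ALT F n = ∑ i : Fin (n+1), ((-1 : ℤ) ^ (i : ℕ)) • (sw F [i] * altW F i) := by
  rw [ALT, ← Fintype.sum_bijective _ P_bijective _ _ (fun p => rfl), Fintype.sum_prod_type]
  apply Finset.sum_congr rfl
  intro i _
  rw [altW, Finset.mul_sum, Finset.smul_sum]
  apply Finset.sum_congr rfl
  intro σ _
  have hword : (List.ofFn fun k => P i σ k) = i :: wrd i σ := by
    simp [List.ofFn_succ, wrd]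
  rw [hword, sign_P]
  have hsw : sw F (i :: wrd i σ) = sw F [i] * sw F (wrd i σ) := by
    rw [sw_mul, List.singleton_append]
  rw [hsw]
  push_cast
  rw [mul_smul]
  congr 1
  rw [mul_smul_comm]

lemma ALT_right (heven : Even n) :
    ALT F n = ∑ i : Fin (n+1), ((-1 : ℤ) ^ (i : ℕ)) • (altW F i * sw F [i]) := by
  have hre : ALT F n = ∑ τ : Equiv.Perm (Fin (n+1)),
      (Equiv.Perm.sign (τ * finRotate (n+1)) : ℤ) •
        sw F (List.ofFn fun k => (τ * finRotate (n+1)) k) := by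
    rw [ALT]
    exact (Fintype.sum_equiv (Equiv.mulRight (finRotate (n+1)))
      (fun τ => (Equiv.Perm.sign (τ * finRotate (n+1)) : ℤ) •
        sw F (List.ofFn fun k => (τ * finRotate (n+1)) k))
      (fun τ => (Equiv.Perm.sign τ : ℤ) • sw F (List.ofFn fun k => τ k))
      (fun τ => rfl)).symm
  rw [hre, ← Fintype.sum_bijective _ P_bijective _ _ (fun p => rfl), Fintype.sum_prod_type]
  apply Finset.sum_congr rfl
  intro i _
  rw [altW, Finset.sum_mul, Finset.smul_sum]
  apply Finset.sum_congr rfl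
  intro σ _
  have hword : (List.ofFn fun k => (P i σ * finRotate (n+1)) k) = (wrd i σ) ++ [i] := by
    rw [List.ofFn_succ', List.concat_eq_append]
    congr 1
    · rw [wrd]
      apply List.ext_getElem (by simp)
      intro j h1 h2
      simp only [List.getElem_ofFn]
      rw [Equiv.Perm.mul_apply]
      rw [finRotate_succ_apply, Fin.coeSucc_eq_succ, P_succ]
    · rw [Equiv.Perm.mul_apply, finRotate_last, P_zero]
  rw [hword]
  have hsgn : Equiv.Perm.sign (P i σ * finRotate (n+1)) = (-1) ^ (i : ℕ) * Equiv.Perm.sign σ := by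
    rw [map_mul, sign_P, sign_finRotate, Nat.add_sub_cancel, Even.neg_one_pow heven, mul_one]
  rw [hsgn]
  have hsw : sw F (wrd i σ ++ [i]) = sw F (wrd i σ) * sw F [i] := by rw [sw_mul]
  rw [hsw]
  push_cast
  rw [mul_smul]
  congr 1
  rw [smul_mul_assoc]

/-- The resolution of the unique overlap ambiguity. -/
lemma alt_identity (heven : Even n) :
    ∑ i : Fin (n+1), ((-1 : ℤ) ^ (i : ℕ)) • (sw F [i] * altW F i)
      = ∑ i : Fin (n+1), ((-1 : ℤ) ^ (i : ℕ)) • (altW F i * sw F [i]) := by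
  rw [← ALT_left, ← ALT_right heven]

end AltSums

section GDef

variable {F : Type} [Field F] {n : ℕ}

/-- The sign `sign(reversal) : F`. -/
noncomputable def dlt (F : Type) [Field F] (n : ℕ) : F :=
  ((Equiv.Perm.sign (Fin.revPerm : Equiv.Perm (Fin n)) : ℤ) : F)

lemma dlt_sq : dlt F n * dlt F n = 1 := by
  rcases Int.units_eq_one_or (Equiv.Perm.sign (Fin.revPerm : Equiv.Perm (Fin n))) with h | h <;>
    rw [dlt, h] <;> norm_num

/-- The normalized generator with leading coefficient `1`. -/
noncomputable def gd (F : Type) [Field F] (n : ℕ) (i : Fin (n+1)) :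
    MonoidAlgebra F (FreeMonoid (Fin (n+1))) :=
  dlt F n • (altW F i + ((-1 : F) ^ (n + (i : ℕ) + 1)) • sw F [i])

lemma zsmul_eq_cast_smul (m : ℤ) (x : MonoidAlgebra F (FreeMonoid (Fin (n+1)))) :
    m • x = ((m : F)) • x := (Int.cast_smul_eq_zsmul F m x).symm

lemma altW_split (i : Fin (n+1)) :
    altW F i = (∑ σ ∈ Finset.univ.erase (Fin.revPerm : Equiv.Perm (Fin n)),
        (Equiv.Perm.sign σ : ℤ) • sw F (wrd i σ))
      + dlt F n • sw F (w i) := by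
  rw [altW, ← Finset.sum_erase_add Finset.univ _
    (Finset.mem_univ (Fin.revPerm : Equiv.Perm (Fin n))), dlt, ← zsmul_eq_cast_smul]
  rfl

lemma gd_dec (hn4 : 4 ≤ n) (i : Fin (n+1)) :
    gd F n i - sw F (w i) ∈ lowSpan F (phi (w i)) := by
  have key : gd F n i - sw F (w i)
      = dlt F n • (∑ σ ∈ Finset.univ.erase (Fin.revPerm : Equiv.Perm (Fin n)),
          (Equiv.Perm.sign σ : ℤ) • sw F (wrd i σ))
        + (dlt F n * (-1 : F) ^ (n + (i : ℕ) + 1)) • sw F [i] := by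
    rw [gd, altW_split, smul_add, smul_add, smul_smul, dlt_sq, one_smul, smul_smul]
    abel
  rw [key]
  apply add_mem
  · apply Submodule.smul_mem
    apply Submodule.sum_mem
    intro σ hσ
    rw [zsmul_eq_cast_smul]
    apply Submodule.smul_mem
    apply Submodule.subset_span
    exact ⟨wrd i σ, wrd_lt_w i (Finset.ne_of_mem_erase hσ), rfl⟩
  · apply Submodule.smul_mem
    apply Submodule.subset_span
    refine ⟨[i], ?_, rfl⟩
    apply phi_lt_of_length_lt
    simp only [List.length_cons, List.length_nil, length_w]
    omega

lemma gd_comm_term (i : Fin (n+1)) :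
    sw F [i] * gd F n i - gd F n i * sw F [i]
      = dlt F n • (sw F [i] * altW F i - altW F i * sw F [i]) := by
  rw [gd, mul_smul_comm, smul_mul_assoc, ← smul_sub]
  congr 1
  rw [mul_add, add_mul, mul_smul_comm, smul_mul_assoc]
  abel

lemma gd_sum_zero (heven : Even n) :
    ∑ i : Fin (n+1), ((-1 : ℤ) ^ (i : ℕ)) •
      (sw F [i] * gd F n i - gd F n i * sw F [i]) = 0 := by
  have h1 : ∀ i : Fin (n+1), ((-1 : ℤ) ^ (i : ℕ)) •
      (sw F [i] * gd F n i - gd F n i * sw F [i])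
      = dlt F n • (((-1 : ℤ) ^ (i : ℕ)) • (sw F [i] * altW F i)
          - ((-1 : ℤ) ^ (i : ℕ)) • (altW F i * sw F [i])) := by
    intro i
    rw [gd_comm_term, smul_comm, smul_sub]
  rw [Finset.sum_congr rfl (fun i _ => h1 i), ← Finset.smul_sum]
  rw [Finset.sum_sub_distrib, alt_identity heven, sub_self, smul_zero]

lemma gd_star (heven : Even n) :
    sw F [Fin.last n] * gd F n (Fin.last n)
      = gd F n (Fin.last n) * sw F [Fin.last n]
        + ∑ j : Fin n, ((-1 : F) ^ ((j : ℕ) + 1)) •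
            (sw F [Fin.castSucc j] * gd F n (Fin.castSucc j)
              - gd F n (Fin.castSucc j) * sw F [Fin.castSucc j]) := by
  have h0 := gd_sum_zero (F := F) heven
  rw [Fin.sum_univ_castSucc] at h0
  simp only [Fin.coe_castSucc, Fin.val_last] at h0
  rw [Even.neg_one_pow heven, one_smul] at h0
  have h1 : sw F [Fin.last n] * gd F n (Fin.last n) - gd F n (Fin.last n) * sw F [Fin.last n]
      = ∑ j : Fin n, ((-1 : ℤ) ^ ((j : ℕ) + 1)) •
          (sw F [Fin.castSucc j] * gd F n (Fin.castSucc j)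
            - gd F n (Fin.castSucc j) * sw F [Fin.castSucc j]) := by
    have h2 : ∀ j : Fin n, ((-1 : ℤ) ^ ((j : ℕ) + 1)) •
        (sw F [Fin.castSucc j] * gd F n (Fin.castSucc j)
          - gd F n (Fin.castSucc j) * sw F [Fin.castSucc j])
        = -(((-1 : ℤ) ^ ((j : ℕ))) •
            (sw F [Fin.castSucc j] * gd F n (Fin.castSucc j)
              - gd F n (Fin.castSucc j) * sw F [Fin.castSucc j])) := by
      intro j
      rw [pow_succ, mul_smul, neg_one_zsmul, smul_neg]
    rw [Finset.sum_congr rfl (fun j _ => h2 j), Finset.sum_neg_distrib]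
    exact eq_neg_of_add_eq_zero_right h0
  have h3 : ∀ (j : Fin n) (x : MonoidAlgebra F (FreeMonoid (Fin (n+1)))),
      ((-1 : ℤ) ^ ((j : ℕ) + 1)) • x = ((-1 : F) ^ ((j : ℕ) + 1)) • x := by
    intro j x
    rw [zsmul_eq_cast_smul]
    norm_cast
  rw [Finset.sum_congr rfl (fun j _ => h3 j _)] at h1
  rw [← sub_eq_iff_eq_add']
  exact h1

end GDef

section Transport

variable {F : Type} [Field F] {n : ℕ}

/-- The canonical identification of the free algebra with the monoid algebra. -/
noncomputable abbrev EMA (F : Type) [Field F] (n : ℕ) :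
    FreeAlgebra F (Fin (n+1)) ≃ₐ[F] MonoidAlgebra F (FreeMonoid (Fin (n+1))) :=
  FreeAlgebra.equivMonoidAlgebraFreeMonoid

lemma e_iota (x : Fin (n+1)) : EMA F n (FreeAlgebra.ι F x) = sw F [x] := by
  rw [sw, FreeMonoid.ofList_singleton]
  simp [EMA, FreeAlgebra.equivMonoidAlgebraFreeMonoid, MonoidAlgebra.of_apply]

lemma prod_sw {m : ℕ} (f : Fin m → Fin (n+1)) :
    (List.ofFn fun k => sw F [f k]).prod = sw F (List.ofFn f) := by
  induction m with
  | zero => simp [sw_nil]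
  | succ m ih =>
    rw [List.ofFn_succ, List.prod_cons, ih, sw_mul]
    congr 1
    rw [List.ofFn_succ (f := f)]
    rfl

lemma e_altSum (i : Fin (n+1)) :
    EMA F n (altSum n (fun k => FreeAlgebra.ι F (i.succAbove k))) = altW F i := by
  rw [altSum, map_sum, altW]
  apply Finset.sum_congr rfl
  intro σ _
  rw [map_zsmul]
  congr 1
  rw [map_list_prod, List.map_ofFn]
  rw [show ((EMA F n) ∘ fun k => FreeAlgebra.ι F (i.succAbove (σ k)))
      = fun k => sw F [i.succAbove (σ k)] from funext fun k => e_iota _]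
  rw [prod_sw]
  rfl

end Transport

end Core

end NLie

/-- For `n ≥ 4` even, the two-sided ideal `I = ⟨G_1, ..., G_{n+1}⟩` of the relations of
the universal envelope of the simple `n`-Lie algebra `L_{n+1}` meets
`span_F(1, x_1, ..., x_{n+1})` trivially; in particular the images of the `x_i` in
`U = F⟨X⟩/I` are linearly independent. -/
theorem ideal_meets_span_trivially (F : Type) [Field F] (hF : ringChar F ≠ 2)
    (n : ℕ) (hn : 4 ≤ n) (heven : Even n)
    (G : Fin (n + 1) → FreeAlgebra F (Fin (n + 1)))
    (hG : ∀ i, G i = (-1 : F) ^ (n / 2) •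
      (altSum n (fun k => ι F (i.succAbove k)) + (-1 : F) ^ (n + (i : ℕ) + 1) • ι F i)) :
    (Submodule.span F {z : FreeAlgebra F (Fin (n + 1)) |
        ∃ (a b : FreeAlgebra F (Fin (n + 1))) (i : Fin (n + 1)), z = a * G i * b} ⊓
      Submodule.span F
        (insert 1 (Set.range (ι F : Fin (n + 1) → FreeAlgebra F (Fin (n + 1))))) = ⊥) ∧
    LinearIndependent F
      (fun i : Fin (n + 1) =>
        RingQuot.mkAlgHom F (fun a b : FreeAlgebra F (Fin (n + 1)) => ∃ i, a = G i ∧ b = 0)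
          (ι F i)) := by
  classical
  open NLie in
  have hε : ((-1 : F) ^ (n / 2) * dlt F n) * ((-1 : F) ^ (n / 2) * dlt F n) = 1 := by
    have h1 := dlt_sq (F := F) (n := n)
    have h2 : ((-1 : F) ^ (n / 2)) * ((-1 : F) ^ (n / 2)) = 1 := by
      rw [← pow_add, ← two_mul, pow_mul]
      norm_num
    calc ((-1 : F) ^ (n / 2) * dlt F n) * ((-1 : F) ^ (n / 2) * dlt F n)
        = (((-1 : F) ^ (n / 2)) * ((-1 : F) ^ (n / 2))) * (dlt F n * dlt F n) := by ring
      _ = 1 := by rw [h1, h2, one_mul]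
  have hgd : ∀ i, EMA F n (G i) = ((-1 : F) ^ (n / 2) * dlt F n) • gd F n i := by
    intro i
    rw [hG i, map_smul, map_add, map_smul, e_altSum, e_iota, gd, smul_smul, mul_assoc,
      dlt_sq, mul_one]
  -- Part 1
  have part1 : (Submodule.span F {z : FreeAlgebra F (Fin (n + 1)) |
        ∃ (a b : FreeAlgebra F (Fin (n + 1))) (i : Fin (n + 1)), z = a * G i * b} ⊓
      Submodule.span F
        (insert 1 (Set.range (ι F : Fin (n + 1) → FreeAlgebra F (Fin (n + 1))))) = ⊥) := by
    rw [eq_bot_iff]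
    intro x hx
    obtain ⟨h1, h2⟩ := Submodule.mem_inf.mp hx
    have hx1 : EMA F n x ∈ SS F (gd F n) := by
      refine Submodule.span_induction (p := fun z _ => EMA F n z ∈ SS F (gd F n))
        ?_ (by simp) ?_ ?_ h1
      · rintro z ⟨a, b, i, rfl⟩
        rw [map_mul, map_mul, hgd i, mul_smul_comm, smul_mul_assoc]
        exact Submodule.smul_mem _ _
          (ideal_sub hn (gd_dec hn) (gd_star heven) (EMA F n a) i (EMA F n b))
      · intro a b _ _ ha hb
        rw [map_add]
        exact add_mem ha hb
      · intro c a _ ha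
        rw [map_smul]
        exact Submodule.smul_mem _ _ ha
    have hx2 : ∀ m'', co m'' (EMA F n x) ≠ 0 → m''.length ≤ 1 := by
      refine Submodule.span_induction
        (p := fun z _ => ∀ m'', co m'' (EMA F n z) ≠ 0 → m''.length ≤ 1)
        ?_ ?_ ?_ ?_ h2
      · rintro z (rfl | ⟨j, rfl⟩)
        · intro m'' hm''
          rw [map_one, show (1 : MonoidAlgebra F (FreeMonoid (Fin (n+1)))) = sw F [] from rfl,
            co_sw] at hm''
          have : ([] : List (Fin (n+1))) = m'' := by
            by_contra hc
            exact hm'' (if_neg hc)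
          rw [← this]
          simp
        · intro m'' hm''
          rw [e_iota, co_sw] at hm''
          have : ([j] : List (Fin (n+1))) = m'' := by
            by_contra hc
            exact hm'' (if_neg hc)
          rw [← this]
          simp
      · intro m'' hm''
        rw [map_zero] at hm''
        exact absurd (co_zero m'') hm''
      · intro a b _ _ ha hb m'' hm''
        rw [map_add, co_add] at hm''
        by_cases hca : co m'' (EMA F n a) = 0
        · exact hb m'' (fun hcb => hm'' (by rw [hca, hcb, add_zero]))
        · exact ha m'' hca
      · intro c a _ ha m'' hm''
        rw [map_smul, co_smul] at hm''
        exact ha m'' (fun hc => hm'' (by rw [hc, mul_zero]))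
    have hex0 : EMA F n x = 0 := L2 hn (gd_dec hn) hx1 hx2
    have : EMA F n x = EMA F n 0 := by rw [map_zero]; exact hex0
    simpa using (EMA F n).injective this
  refine ⟨part1, ?_⟩
  -- Part 2
  rw [Fintype.linearIndependent_iff]
  intro cv hcv i0
  set rel := fun a b : FreeAlgebra F (Fin (n + 1)) => ∃ i, a = G i ∧ b = 0 with hrel
  set z := ∑ i : Fin (n+1), cv i • FreeAlgebra.ι F i with hz
  set Jmod := Submodule.span F {z : FreeAlgebra F (Fin (n + 1)) |
      ∃ (a b : FreeAlgebra F (Fin (n + 1))) (i : Fin (n + 1)), z = a * G i * b} with hJ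
  have hmkz : RingQuot.mkAlgHom F rel z = 0 := by
    rw [hz, map_sum]
    simp_rw [map_smul]
    exact hcv
  -- closure of Jmod under left and right multiplication
  have hright : ∀ x ∈ Jmod, ∀ c, x * c ∈ Jmod := by
    intro x hx c
    refine Submodule.span_induction (p := fun y _ => y * c ∈ Jmod)
      ?_ (by simp) ?_ ?_ hx
    · rintro y ⟨a, b, i, rfl⟩
      refine Submodule.subset_span ⟨a, b * c, i, ?_⟩
      rw [mul_assoc, mul_assoc]
    · intro a b _ _ ha hb
      rw [add_mul]
      exact add_mem ha hb
    · intro r a _ ha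
      rw [smul_mul_assoc]
      exact Submodule.smul_mem _ _ ha
  have hleft : ∀ x ∈ Jmod, ∀ c, c * x ∈ Jmod := by
    intro x hx c
    refine Submodule.span_induction (p := fun y _ => c * y ∈ Jmod)
      ?_ (by simp) ?_ ?_ hx
    · rintro y ⟨a, b, i, rfl⟩
      refine Submodule.subset_span ⟨c * a, b, i, ?_⟩
      rw [mul_assoc, mul_assoc, mul_assoc]
    · intro a b _ _ ha hb
      rw [mul_add]
      exact add_mem ha hb
    · intro r a _ ha
      rw [mul_smul_comm]
      exact Submodule.smul_mem _ _ ha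
  have hresp : ∀ a b : FreeAlgebra F (Fin (n + 1)), RingQuot.Rel rel a b →
      (Submodule.Quotient.mk a : FreeAlgebra F (Fin (n + 1)) ⧸ Jmod)
        = Submodule.Quotient.mk b := by
    intro a b h
    induction h with
    | of h =>
      obtain ⟨i, ha, hb⟩ := h
      rw [Submodule.Quotient.eq, ha, hb, sub_zero]
      exact Submodule.subset_span ⟨1, 1, i, by rw [one_mul, mul_one]⟩
    | add_left _ ih =>
      rw [Submodule.Quotient.eq] at ih ⊢
      simpa [add_sub_add_right_eq_sub] using ih
    | mul_left _ ih =>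
      rw [Submodule.Quotient.eq] at ih ⊢
      rw [← sub_mul]
      exact hright _ ih _
    | mul_right _ ih =>
      rw [Submodule.Quotient.eq] at ih ⊢
      rw [← mul_sub]
      exact hleft _ ih _
  have hker : z ∈ Jmod := by
    have e1 : ∀ y : FreeAlgebra F (Fin (n + 1)),
        RingQuot.mkRingHom rel y = RingQuot.mkAlgHom F rel y := fun y => by
      rw [← RingQuot.mkAlgHom_coe F rel]
      rfl
    have h1 : RingQuot.mkRingHom rel z = RingQuot.mkRingHom rel 0 := by
      rw [e1, e1, map_zero, hmkz]
    rw [RingQuot.mkRingHom_def] at h1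
    simp only [RingHom.coe_mk, MonoidHom.coe_mk, OneHom.coe_mk] at h1
    have hq : Quot.mk (RingQuot.Rel rel) z = Quot.mk (RingQuot.Rel rel) 0 :=
      congrArg RingQuot.toQuot h1
    have h2 := congrArg
      (Quot.lift (fun y => (Submodule.Quotient.mk y : FreeAlgebra F (Fin (n + 1)) ⧸ Jmod))
        hresp) hq
    have h3 : (Submodule.Quotient.mk z : FreeAlgebra F (Fin (n + 1)) ⧸ Jmod)
        = Submodule.Quotient.mk 0 := h2
    rw [Submodule.Quotient.eq] at h3
    simpa using h3
  have hzK : z ∈ Submodule.span F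
      (insert 1 (Set.range (ι F : Fin (n + 1) → FreeAlgebra F (Fin (n + 1))))) := by
    rw [hz]
    exact Submodule.sum_mem _ (fun i _ => Submodule.smul_mem _ _
      (Submodule.subset_span (Set.mem_insert_of_mem _ ⟨i, rfl⟩)))
  have hz0 : z = 0 := by
    have : z ∈ (⊥ : Submodule F (FreeAlgebra F (Fin (n + 1)))) := by
      rw [← part1]
      exact Submodule.mem_inf.mpr ⟨hker, hzK⟩
    simpa using this
  have he : (∑ i : Fin (n+1), cv i • sw F [i] :
      MonoidAlgebra F (FreeMonoid (Fin (n+1)))) = 0 := by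
    have h4 := congrArg (EMA F n) hz0
    rw [hz, map_sum, map_zero] at h4
    simp_rw [map_smul, e_iota] at h4
    exact h4
  have h5 := congrArg (co ([i0] : List (Fin (n+1)))) he
  rw [co_zero] at h5
  rw [co, MonoidAlgebra.coeff_sum, Finsupp.finset_sum_apply] at h5
  rw [Finset.sum_eq_single i0] at h5
  · rw [show ((cv i0 • sw F [i0] : MonoidAlgebra F (FreeMonoid (Fin (n+1)))).coeff
        (FreeMonoid.ofList [i0])) = cv i0 * co [i0] (sw F [i0]) from rfl, co_sw,
      if_pos rfl, mul_one] at h5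
    exact h5
  · intro i _ hne
    rw [show ((cv i • sw F [i] : MonoidAlgebra F (FreeMonoid (Fin (n+1)))).coeff
        (FreeMonoid.ofList [i0])) = cv i * co [i0] (sw F [i]) from rfl, co_sw,
      if_neg (by simp [hne]), mul_zero]
  · intro h
    exact absurd (Finset.mem_univ i0) h
end

section
/- In the free associative algebra on a, b, c, d over a field F of characteristic 0, with G_1 = dcb − dbc − cdb + cbd + bdc − bcd − a and G_4 = cba − cab − bca + bac + acb − abc + d, the element G_1·a − d·G_4 is congruent, modulo the two-sided ideal generated by G_1, G_2, G_3, G_4, to N = d² + c² + b² + a², where G_2 = dca − dac − cda + cad + adc − acd + b and G_3 = dba − dab − bda + bad + adb − abd − c. In particular, N lies in the ideal ⟨G_1, G_2, G_3, G_4⟩. -/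
open FreeAlgebra

/-- In `F⟨a,b,c,d⟩` with the relations `G_1, G_2, G_3, G_4` of the universal envelope of
the simple 3-Lie algebra `L_4`, the composition `G_1·a − d·G_4` is congruent modulo the
two-sided ideal `⟨G_1, G_2, G_3, G_4⟩` to `N = d² + c² + b² + a²`; in particular `N` lies
in this ideal. -/
theorem L4_composition_normal_form (F : Type) [Field F] (hF : ringChar F = 0)
    (a b c d : FreeAlgebra F (Fin 4))
    (ha : a = ι F 0) (hb : b = ι F 1) (hc : c = ι F 2) (hd : d = ι F 3)
    (G₁ G₂ G₃ G₄ : FreeAlgebra F (Fin 4))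
    (hG₁ : G₁ = d*c*b - d*b*c - c*d*b + c*b*d + b*d*c - b*c*d - a)
    (hG₂ : G₂ = d*c*a - d*a*c - c*d*a + c*a*d + a*d*c - a*c*d + b)
    (hG₃ : G₃ = d*b*a - d*a*b - b*d*a + b*a*d + a*d*b - a*b*d - c)
    (hG₄ : G₄ = c*b*a - c*a*b - b*c*a + b*a*c + a*c*b - a*b*c + d) :
    (G₁ * a - d * G₄) - (d*d + c*c + b*b + a*a) ∈
      Submodule.span F {z : FreeAlgebra F (Fin 4) |
        ∃ (u v g : FreeAlgebra F (Fin 4)), g ∈ ({G₁, G₂, G₃, G₄} : Set _) ∧ z = u * g * v} ∧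
    (d*d + c*c + b*b + a*a) ∈
      Submodule.span F {z : FreeAlgebra F (Fin 4) |
        ∃ (u v g : FreeAlgebra F (Fin 4)), g ∈ ({G₁, G₂, G₃, G₄} : Set _) ∧ z = u * g * v} := by
  have h2 : (2 : F) ≠ 0 := by
    haveI : CharZero F := (CharP.ringChar_zero_iff_CharZero F).mp hF
    exact two_ne_zero
  set I : Submodule F (FreeAlgebra F (Fin 4)) :=
    Submodule.span F {z : FreeAlgebra F (Fin 4) |
      ∃ (u v g : FreeAlgebra F (Fin 4)), g ∈ ({G₁, G₂, G₃, G₄} : Set _) ∧ z = u * g * v}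
    with hI
  have mem : ∀ u v g : FreeAlgebra F (Fin 4),
      g ∈ ({G₁, G₂, G₃, G₄} : Set _) → u * g * v ∈ I := fun u v g hg =>
    Submodule.subset_span ⟨u, v, g, hg, rfl⟩
  have m1 : G₁ * a ∈ I := by
    have := mem 1 a G₁ (by simp); rwa [one_mul] at this
  have m2 : a * G₁ ∈ I := by
    have := mem a 1 G₁ (by simp); rwa [mul_one] at this
  have m3 : G₂ * b ∈ I := by
    have := mem 1 b G₂ (by simp); rwa [one_mul] at this
  have m4 : b * G₂ ∈ I := by
    have := mem b 1 G₂ (by simp); rwa [mul_one] at this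
  have m5 : G₃ * c ∈ I := by
    have := mem 1 c G₃ (by simp); rwa [one_mul] at this
  have m6 : c * G₃ ∈ I := by
    have := mem c 1 G₃ (by simp); rwa [mul_one] at this
  have m7 : G₄ * d ∈ I := by
    have := mem 1 d G₄ (by simp); rwa [one_mul] at this
  have m8 : d * G₄ ∈ I := by
    have := mem d 1 G₄ (by simp); rwa [mul_one] at this
  have half_mem : ∀ x : FreeAlgebra F (Fin 4), x + x ∈ I → x ∈ I := by
    intro x hx
    have h2x : (2 : F) • x ∈ I := by rw [two_smul]; exact hx
    have := I.smul_mem (2 : F)⁻¹ h2x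
    rwa [smul_smul, inv_mul_cancel₀ h2, one_smul] at this
  constructor
  · apply half_mem
    have key : (G₁ * a - d * G₄ - (d*d + c*c + b*b + a*a)) +
        (G₁ * a - d * G₄ - (d*d + c*c + b*b + a*a)) =
        (G₁ * a + (G₁ * a + G₁ * a)) + a * G₁ - G₂ * b - b * G₂ + G₃ * c + c * G₃
          - G₄ * d - (d * G₄ + (d * G₄ + d * G₄)) := by
      subst hG₁ hG₂ hG₃ hG₄
      noncomm_ring
    rw [key]
    repeat' first
      | exact m1 | exact m2 | exact m3 | exact m4
      | exact m5 | exact m6 | exact m7 | exact m8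
      | apply Submodule.add_mem | apply Submodule.sub_mem | apply Submodule.neg_mem
  · apply half_mem
    have key : (d*d + c*c + b*b + a*a) + (d*d + c*c + b*b + a*a) =
        G₂ * b + b * G₂ + G₄ * d + d * G₄ - G₁ * a - a * G₁ - G₃ * c - c * G₃ := by
      subst hG₁ hG₂ hG₃ hG₄
      noncomm_ring
    rw [key]
    repeat' first
      | exact m1 | exact m2 | exact m3 | exact m4
      | exact m5 | exact m6 | exact m7 | exact m8
      | apply Submodule.add_mem | apply Submodule.sub_mem | apply Submodule.neg_mem
end

section
/- Let n ≥ 4 be even, F any field, and let L be the (n+1)-dimensional n-Lie algebra with only nonzero bracket [e_1,...,e_n] = e_1 (case (1b)). Then the element N = x_{n+1} x_1 − x_1 x_{n+1} lies in the ideal I of F⟨x_1,...,x_{n+1}⟩ generated by G_i = (-1)^{⌊n/2⌋} alt(x_1,...,x̂_i,...,x_{n+1}) for 1 ≤ i ≤ n, and G_{n+1} = (-1)^{⌊n/2⌋}(alt(x_1,...,x_n) − x_1). Explicitly, N is obtained from G_1 x_1 − x_{n+1} G_{n+1} by reduction modulo G_1,...,G_{n+1}, i.e., x_{n+1}x_1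 − x_1x_{n+1} ≡ G_1 x_1 − x_{n+1} G_{n+1} modulo the left-right multiples of G_1,...,G_{n+1} used in the reduction, so in particular N ∈ I. -/
open FreeAlgebra

section Lemmas
variable {A : Type} [Ring A]

private def phi (n : ℕ) (p : Fin (n + 1) × Equiv.Perm (Fin n)) : Equiv.Perm (Fin (n + 1)) :=
  p.1.cycleRange.symm * Equiv.Perm.decomposeFin.symm (0, p.2)

lemma phi_zero (n : ℕ) (p : Fin (n + 1) × Equiv.Perm (Fin n)) : phi n p 0 = p.1 := by
  simp [phi, Equiv.Perm.mul_apply]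

lemma phi_succ (n : ℕ) (p : Fin (n + 1) × Equiv.Perm (Fin n)) (k : Fin n) :
    phi n p k.succ = p.1.succAbove (p.2 k) := by
  simp [phi, Equiv.Perm.mul_apply, Equiv.swap_self]

lemma phi_sign (n : ℕ) (p : Fin (n + 1) × Equiv.Perm (Fin n)) :
    Equiv.Perm.sign (phi n p) = (-1) ^ (p.1 : ℕ) * Equiv.Perm.sign p.2 := by
  rw [phi, map_mul, Equiv.Perm.decomposeFin.symm_sign, if_pos rfl, one_mul]
  congr 1
  rw [Equiv.Perm.sign_symm, Fin.sign_cycleRange]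

lemma phi_bijective (n : ℕ) : Function.Bijective (phi n) := by
  rw [Fintype.bijective_iff_injective_and_card]
  constructor
  · rintro ⟨i, τ⟩ ⟨i', τ'⟩ h
    have h0 : i = i' := by
      have := congrArg (fun σ : Equiv.Perm (Fin (n+1)) => σ 0) h
      simpa [phi_zero] using this
    subst h0
    have : Equiv.Perm.decomposeFin.symm (0, τ) = Equiv.Perm.decomposeFin.symm ((0 : Fin (n+1)), τ') :=
      mul_left_cancel h
    have := Equiv.Perm.decomposeFin.symm.injective this
    simp_all
  · simp [Fintype.card_perm, Nat.factorial_succ]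

lemma altSum_succ_left (n : ℕ) (y : Fin (n + 1) → A) :
    altSum (n + 1) y =
      ∑ i : Fin (n + 1), ((-1 : ℤ) ^ (i : ℕ)) •
        (y i * altSum n (fun k => y (i.succAbove k))) := by
  rw [altSum]
  rw [← (Fintype.sum_bijective (phi n) (phi_bijective n)
      (fun p => (Equiv.Perm.sign (phi n p) : ℤ) • (List.ofFn fun k => y (phi n p k)).prod)
      _ (fun p => rfl))]
  rw [Fintype.sum_prod_type]
  refine Finset.sum_congr rfl fun i _ => ?_
  rw [altSum, Finset.mul_sum, Finset.smul_sum]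
  refine Finset.sum_congr rfl fun τ _ => ?_
  rw [phi_sign, List.ofFn_succ]
  simp only [phi_zero, phi_succ]
  rw [List.prod_cons]
  push_cast
  rw [mul_smul_comm, smul_smul]

lemma ofFn_rev {α : Type*} (n : ℕ) (f : Fin n → α) :
    (List.ofFn fun k => f (Fin.rev k)) = (List.ofFn f).reverse := by
  apply List.ext_getElem
  · simp
  · intro i h1 h2
    simp only [List.getElem_ofFn, List.getElem_reverse, List.length_ofFn] at *
    congr 1
    ext
    simp [Fin.rev]
    omega

lemma op_altSum (n : ℕ) (x : Fin n → A) :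
    altSum n (fun k => MulOpposite.op (x (Fin.rev k))) = MulOpposite.op (altSum n x) := by
  rw [altSum, altSum]
  have hb : Function.Bijective (fun σ : Equiv.Perm (Fin n) => Fin.revPerm * σ * Fin.revPerm) := by
    apply Function.bijective_iff_has_inverse.mpr
    refine ⟨fun σ => Fin.revPerm * σ * Fin.revPerm, fun σ => ?_, fun σ => ?_⟩ <;>
    · ext k
      simp [Equiv.Perm.mul_apply]
  rw [← Fintype.sum_bijective _ hb _ _ (fun σ => rfl)]
  rw [show MulOpposite.op (∑ σ : Equiv.Perm (Fin n), (Equiv.Perm.sign σ : ℤ) • (List.ofFn fun k => x (σ k)).prod)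
      = ∑ σ : Equiv.Perm (Fin n), MulOpposite.op ((Equiv.Perm.sign σ : ℤ) • (List.ofFn fun k => x (σ k)).prod)
    from map_sum (MulOpposite.opAddEquiv : A ≃+ Aᵐᵒᵖ) _ _]
  refine Finset.sum_congr rfl fun σ _ => ?_
  have hsign : Equiv.Perm.sign (Fin.revPerm * σ * Fin.revPerm : Equiv.Perm (Fin n)) =
      Equiv.Perm.sign σ := by
    simp only [map_mul]
    rw [mul_comm, ← mul_assoc, Int.units_mul_self, one_mul]
  rw [hsign, MulOpposite.op_smul, MulOpposite.op_list_prod, List.map_ofFn, ← ofFn_rev]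
  refine congrArg _ (congrArg List.prod (congrArg List.ofFn (funext fun k => ?_)))
  simp [Equiv.Perm.mul_apply]

lemma altSum_succ_right (n : ℕ) (y : Fin (n + 1) → A) :
    altSum (n + 1) y =
      ∑ i : Fin (n + 1), ((-1 : ℤ) ^ ((Fin.rev i : Fin (n + 1)) : ℕ)) •
        (altSum n (fun k => y (i.succAbove k)) * y i) := by
  apply MulOpposite.op_injective
  rw [← op_altSum (n + 1) y, altSum_succ_left]
  rw [show MulOpposite.op (∑ i : Fin (n + 1), ((-1 : ℤ) ^ ((Fin.rev i : Fin (n + 1)) : ℕ)) •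
        (altSum n (fun k => y (i.succAbove k)) * y i))
      = ∑ i : Fin (n + 1), MulOpposite.op (((-1 : ℤ) ^ ((Fin.rev i : Fin (n + 1)) : ℕ)) •
        (altSum n (fun k => y (i.succAbove k)) * y i))
    from map_sum (MulOpposite.opAddEquiv : A ≃+ Aᵐᵒᵖ) _ _]
  apply Fintype.sum_equiv (Fin.revPerm : Equiv.Perm (Fin (n + 1)))
  intro i
  rw [show (fun k => MulOpposite.op (y (i.succAbove k).rev))
        = fun k => MulOpposite.op ((fun j => y (i.rev.succAbove j)) (Fin.rev k)) from
      funext fun k => by rw [Fin.rev_succAbove]]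
  rw [op_altSum n (fun j => y (i.rev.succAbove j))]
  simp only [Fin.revPerm_apply, Fin.rev_rev]
  rw [← MulOpposite.op_mul, ← MulOpposite.op_smul]

end Lemmas

/-- Case (1b): for the `n`-Lie algebra with only nonzero bracket `[e_1,...,e_n] = e_1`
(`n ≥ 4` even), the element `N = x_{n+1}x_1 − x_1x_{n+1}` is congruent to the composition
`G_1 x_1 − x_{n+1} G_{n+1}` modulo the two-sided ideal `I = ⟨G_1, ..., G_{n+1}⟩`, and in
particular `N ∈ I`.  (`0`-indexed: `x_1 ↔ ι F 0`, `x_{n+1} ↔ ι F (Fin.last n)`.) -/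
theorem case1b_new_generator (F : Type) [Field F]
    (n : ℕ) (hn : 4 ≤ n) (heven : Even n)
    (G : Fin (n + 1) → FreeAlgebra F (Fin (n + 1)))
    (hG : ∀ i, i ≠ Fin.last n →
      G i = (-1 : F) ^ (n / 2) • altSum n (fun k => ι F (i.succAbove k)))
    (hGlast : G (Fin.last n) = (-1 : F) ^ (n / 2) •
      (altSum n (fun k => ι F ((Fin.last n).succAbove k)) - ι F 0)) :
    ((G 0 * ι F 0 - ι F (Fin.last n) * G (Fin.last n)) -
        (ι F (Fin.last n) * ι F 0 - ι F 0 * ι F (Fin.last n)) ∈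
      Submodule.span F {z : FreeAlgebra F (Fin (n + 1)) |
        ∃ (a b : FreeAlgebra F (Fin (n + 1))) (i : Fin (n + 1)), z = a * G i * b}) ∧
    (ι F (Fin.last n) * ι F 0 - ι F 0 * ι F (Fin.last n) ∈
      Submodule.span F {z : FreeAlgebra F (Fin (n + 1)) |
        ∃ (a b : FreeAlgebra F (Fin (n + 1))) (i : Fin (n + 1)), z = a * G i * b}) := by
  set S := Submodule.span F {z : FreeAlgebra F (Fin (n + 1)) |
      ∃ (a b : FreeAlgebra F (Fin (n + 1))) (i : Fin (n + 1)), z = a * G i * b} with hS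
  have hmem : ∀ (a b : FreeAlgebra F (Fin (n + 1))) (i : Fin (n + 1)), a * G i * b ∈ S :=
    fun a b i => Submodule.subset_span ⟨a, b, i, rfl⟩
  set s : F := (-1 : F) ^ (n / 2) with hsdef
  have hs : s * s = 1 := by
    rw [← pow_add]
    exact Even.neg_one_pow ⟨n / 2, rfl⟩
  -- A i = s • G i + correction
  have hAu : ∀ i : Fin (n + 1), altSum n (fun k => ι F (i.succAbove k)) =
      s • G i + (if i = Fin.last n then ι F 0 else 0) := by
    intro i
    by_cases h : i = Fin.last n
    · subst h
      rw [if_pos rfl, hGlast, smul_smul, hs, one_smul, sub_add_cancel]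
    · rw [if_neg h, add_zero, hG i h, smul_smul, hs, one_smul]
  -- parity
  have hpar : ∀ i : Fin (n + 1), ((-1 : ℤ) ^ ((Fin.rev i : Fin (n + 1)) : ℕ)) =
      (-1 : ℤ) ^ (i : ℕ) := by
    intro i
    have hval : ((Fin.rev i : Fin (n + 1)) : ℕ) = n - (i : ℕ) := by
      rw [Fin.val_rev]
      omega
    rw [hval]
    have hle : (i : ℕ) ≤ n := Fin.is_le i
    rcases Nat.even_or_odd (i : ℕ) with he | ho
    · rw [he.neg_one_pow, Even.neg_one_pow ((Nat.even_sub hle).mpr (by simp [heven, he]))]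
    · rw [ho.neg_one_pow, Odd.neg_one_pow (by
        rcases Nat.even_or_odd (n - (i : ℕ)) with h2 | h2
        · exact absurd (((Nat.even_sub hle).mp h2).mp heven) (Nat.not_even_iff_odd.mpr ho)
        · exact h2)]
  have hlastpow : ((-1 : ℤ) ^ ((Fin.last n : Fin (n + 1)) : ℕ)) = 1 := by
    rw [Fin.val_last]
    exact heven.neg_one_pow
  -- the two expansions
  have E1 := altSum_succ_left n (fun k : Fin (n + 1) => ι F k)
  have E2 := altSum_succ_right n (fun k : Fin (n + 1) => ι F k)
  simp only [hpar] at E2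
  have hEq : (∑ i : Fin (n + 1), ((-1 : ℤ) ^ (i : ℕ)) •
        (ι F i * altSum n (fun k => ι F (i.succAbove k)))) =
      ∑ i : Fin (n + 1), ((-1 : ℤ) ^ (i : ℕ)) •
        (altSum n (fun k => ι F (i.succAbove k)) * ι F i) := E1.symm.trans E2
  simp only [hAu] at hEq
  -- expand the sums
  have expandL : ∀ i : Fin (n + 1), ((-1 : ℤ) ^ (i : ℕ)) •
      (ι F i * (s • G i + (if i = Fin.last n then ι F 0 else 0))) =
      ((-1 : ℤ) ^ (i : ℕ)) • (ι F i * (s • G i)) +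
      ((-1 : ℤ) ^ (i : ℕ)) • (ι F i * (if i = Fin.last n then ι F 0 else 0)) := by
    intro i; rw [mul_add, smul_add]
  have expandR : ∀ i : Fin (n + 1), ((-1 : ℤ) ^ (i : ℕ)) •
      ((s • G i + (if i = Fin.last n then ι F 0 else 0)) * ι F i) =
      ((-1 : ℤ) ^ (i : ℕ)) • ((s • G i) * ι F i) +
      ((-1 : ℤ) ^ (i : ℕ)) • ((if i = Fin.last n then ι F 0 else 0) * ι F i) := by
    intro i; rw [add_mul, smul_add]
  simp only [expandL, expandR, Finset.sum_add_distrib] at hEq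
  have hv1 : (∑ i : Fin (n + 1), ((-1 : ℤ) ^ (i : ℕ)) •
      (ι F i * (if i = Fin.last n then ι F 0 else 0))) =
      ι F (Fin.last n) * ι F 0 := by
    rw [Finset.sum_eq_single (Fin.last n)]
    · rw [if_pos rfl, hlastpow, one_smul]
    · intro b _ hb; rw [if_neg hb, mul_zero, smul_zero]
    · intro h; exact absurd (Finset.mem_univ _) h
  have hv2 : (∑ i : Fin (n + 1), ((-1 : ℤ) ^ (i : ℕ)) •
      ((if i = Fin.last n then ι F 0 else 0) * ι F i)) =
      ι F 0 * ι F (Fin.last n) := by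
    rw [Finset.sum_eq_single (Fin.last n)]
    · rw [if_pos rfl, hlastpow, one_smul]
    · intro b _ hb; rw [if_neg hb, zero_mul, smul_zero]
    · intro h; exact absurd (Finset.mem_univ _) h
  rw [hv1, hv2] at hEq
  -- N as an element of the span
  have hsum : ι F (Fin.last n) * ι F 0 - ι F 0 * ι F (Fin.last n) =
      ∑ i : Fin (n + 1), (((-1 : ℤ) ^ (i : ℕ)) • ((s • G i) * ι F i) -
        ((-1 : ℤ) ^ (i : ℕ)) • (ι F i * (s • G i))) := by
    rw [Finset.sum_sub_distrib]
    refine sub_eq_sub_iff_add_eq_add.mpr ?_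
    exact (add_comm _ _).trans hEq
  have hNmem : ι F (Fin.last n) * ι F 0 - ι F 0 * ι F (Fin.last n) ∈ S := by
    rw [hsum]
    refine Submodule.sum_mem S fun i _ => ?_
    have h1 : (s • G i) * ι F i ∈ S := by
      rw [smul_mul_assoc]
      exact S.smul_mem s (by rw [← one_mul (G i * ι F i), ← mul_assoc]; exact hmem 1 (ι F i) i)
    have h2 : ι F i * (s • G i) ∈ S := by
      rw [mul_smul_comm]
      exact S.smul_mem s (by simpa using hmem (ι F i) 1 i)
    have hz : ∀ (z : ℤ) (w : FreeAlgebra F (Fin (n + 1))), w ∈ S → z • w ∈ S := by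
      intro z w hw
      rw [← Int.cast_smul_eq_zsmul F]
      exact S.smul_mem _ hw
    exact sub_mem (hz _ _ h1) (hz _ _ h2)
  refine ⟨?_, hNmem⟩
  refine sub_mem (sub_mem ?_ ?_) hNmem
  · rw [← one_mul (G 0 * ι F 0), ← mul_assoc]; exact hmem 1 (ι F 0) 0
  · simpa using hmem (ι F (Fin.last n)) 1 (Fin.last n)
end

section
/- Let n ≥ 4 be even and F any field, and consider the ideal I of F⟨x_1,...,x_{n+1}⟩ generated by G_i = (-1)^{⌊n/2⌋} alt(x_1,...,x̂_i,...,x_{n+1}) for all 1 ≤ i ≤ n+1 (the case of the Abelian n-Lie algebra). Then the intersection of I with the span of 1, x_1, ..., x_{n+1} is zero; in particular the images of x_1,...,x_{n+1} in F⟨X⟩/I are linearly independent, so the Abelian (n+1)-dimensional n-Lie algebra embeds into an associative algebra via its alternating n-ary sum. -/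
open FreeAlgebra

private lemma altSum_algHom {F A B : Type} [CommRing F] [Ring A] [Ring B] [Algebra F A]
    [Algebra F B] (f : A →ₐ[F] B) (n : ℕ) (x : Fin n → A) :
    f (altSum n x) = altSum n (fun k => f (x k)) := by
  unfold altSum
  rw [map_sum]
  refine Finset.sum_congr rfl fun σ _ => ?_
  rw [map_zsmul, map_list_prod, List.map_ofFn]
  rfl

private lemma altSum_inr_zero {F : Type} [Field F] {N : ℕ}
    {n : ℕ} (hn : 2 ≤ n) (v : Fin n → (Fin N → F)) :
    altSum n (fun k => (TrivSqZeroExt.inr (v k) : TrivSqZeroExt F (Fin N → F))) = 0 := by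
  unfold altSum
  refine Finset.sum_eq_zero fun σ _ => ?_
  obtain ⟨m, rfl⟩ : ∃ m, n = m + 2 := ⟨n - 2, by omega⟩
  rw [List.ofFn_succ, List.ofFn_succ, List.prod_cons, List.prod_cons, ← mul_assoc,
    TrivSqZeroExt.inr_mul_inr F, zero_mul, smul_zero]

/-- For the Abelian `(n+1)`-dimensional `n`-Lie algebra (`n ≥ 4` even), with
`G_i = (-1)^{⌊n/2⌋} alt(x_1, ..., x̂_i, ..., x_{n+1})`, the two-sided ideal
`I = ⟨G_1, ..., G_{n+1}⟩` meets `span_F(1, x_1, ..., x_{n+1})` trivially; in particular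
the images of the `x_i` in `F⟨X⟩/I` are linearly independent, so the Abelian `n`-Lie
algebra embeds into an associative algebra via its alternating `n`-ary sum (the
alternating sum of the images of the basis vectors vanishes, matching the zero
bracket). -/
theorem abelian_embeds (F : Type) [Field F]
    (n : ℕ) (hn : 4 ≤ n) (heven : Even n)
    (G : Fin (n + 1) → FreeAlgebra F (Fin (n + 1)))
    (hG : ∀ i, G i = (-1 : F) ^ (n / 2) • altSum n (fun k => ι F (i.succAbove k))) :
    (Submodule.span F {z : FreeAlgebra F (Fin (n + 1)) |
        ∃ (a b : FreeAlgebra F (Fin (n + 1))) (i : Fin (n + 1)), z = a * G i * b} ⊓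
      Submodule.span F
        (insert 1 (Set.range (ι F : Fin (n + 1) → FreeAlgebra F (Fin (n + 1))))) = ⊥) ∧
    LinearIndependent F
      (fun i : Fin (n + 1) =>
        RingQuot.mkAlgHom F (fun a b : FreeAlgebra F (Fin (n + 1)) => ∃ i, a = G i ∧ b = 0)
          (ι F i)) ∧
    (∀ i : Fin (n + 1),
      altSum n (fun k =>
        RingQuot.mkAlgHom F (fun a b : FreeAlgebra F (Fin (n + 1)) => ∃ i, a = G i ∧ b = 0)
          (ι F (i.succAbove k))) = 0) := by
  classical
  let φ : FreeAlgebra F (Fin (n + 1)) →ₐ[F] TrivSqZeroExt F (Fin (n + 1) → F) :=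
    FreeAlgebra.lift F (fun i => TrivSqZeroExt.inr (Pi.single i 1))
  have hφι : ∀ i, φ (ι F i) = TrivSqZeroExt.inr (Pi.single i 1) := fun i =>
    FreeAlgebra.lift_ι_apply _ _
  have hφG : ∀ i, φ (G i) = 0 := by
    intro i
    rw [hG i, map_smul, altSum_algHom]
    simp only [hφι]
    rw [altSum_inr_zero (n := n) (by omega), smul_zero]
  -- the scalar is a square root of 1
  have hc : ((-1 : F) ^ (n / 2)) * ((-1 : F) ^ (n / 2)) = 1 := by
    rw [← pow_add]
    exact Even.neg_one_pow ⟨n / 2, rfl⟩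
  -- altSum = c • G i
  have haltG : ∀ i, altSum n (fun k => ι F (i.succAbove k)) = (-1 : F) ^ (n / 2) • G i := by
    intro i
    rw [hG i, smul_smul, hc, one_smul]
  set rel : FreeAlgebra F (Fin (n + 1)) → FreeAlgebra F (Fin (n + 1)) → Prop :=
    fun a b => ∃ i, a = G i ∧ b = 0 with hrel
  have hrelφ : ∀ ⦃a b : FreeAlgebra F (Fin (n + 1))⦄, rel a b → φ a = φ b := by
    rintro a b ⟨i, rfl, rfl⟩
    rw [hφG, map_zero]
  have hmkG : ∀ i, RingQuot.mkAlgHom F rel (G i) = 0 := by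
    intro i
    rw [RingQuot.mkAlgHom_rel F ⟨i, rfl, rfl⟩, map_zero]
  refine ⟨?_, ?_, ?_⟩
  · -- intersection is trivial
    rw [eq_bot_iff]
    rintro x ⟨hxI, hxS⟩
    have hφx : φ x = 0 := by
      have hle : Submodule.span F {z : FreeAlgebra F (Fin (n + 1)) |
          ∃ (a b : FreeAlgebra F (Fin (n + 1))) (i : Fin (n + 1)), z = a * G i * b} ≤
          LinearMap.ker φ.toLinearMap := by
        rw [Submodule.span_le]
        rintro z ⟨a, b, i, rfl⟩
        simp [LinearMap.mem_ker, map_mul, hφG]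
      exact hle hxI
    -- left inverse on the span of 1 and the generators
    let ψ : TrivSqZeroExt F (Fin (n + 1) → F) →ₗ[F] FreeAlgebra F (Fin (n + 1)) :=
      (Algebra.linearMap F _).comp (TrivSqZeroExt.fstHom F F _).toLinearMap +
        (Fintype.linearCombination F (fun j => ι F j)).comp (TrivSqZeroExt.sndHom F _)
    have hψφ' : ∀ y ∈ Submodule.span F
        (insert 1 (Set.range (ι F : Fin (n + 1) → FreeAlgebra F (Fin (n + 1))))),
        ψ (φ y) = y := by
      intro y hy
      induction hy using Submodule.span_induction with
      | mem z hz =>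
        rcases hz with rfl | ⟨i, rfl⟩
        · simp only [ψ, map_one, LinearMap.add_apply, LinearMap.comp_apply,
            AlgHom.toLinearMap_apply, map_one, Fintype.linearCombination_apply]
          simp only [TrivSqZeroExt.sndHom_apply, TrivSqZeroExt.snd_one]
          simp
        · rw [hφι]
          simp only [ψ, LinearMap.add_apply, LinearMap.comp_apply,
            AlgHom.toLinearMap_apply, Fintype.linearCombination_apply]
          simp only [TrivSqZeroExt.sndHom_apply, TrivSqZeroExt.fstHom_apply,
            TrivSqZeroExt.fst_inr, TrivSqZeroExt.snd_inr, map_zero, zero_add,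
            Pi.single_apply, ite_smul, zero_smul]
          simp
      | zero => simp
      | add a b _ _ ha hb => rw [map_add, map_add, ha, hb]
      | smul c a _ ha => rw [map_smul, map_smul, ha]
    have hψφ := hψφ' x hxS
    rw [hφx, map_zero] at hψφ
    simp [← hψφ]
  · -- linear independence in the quotient
    apply LinearIndependent.of_comp
      (RingQuot.liftAlgHom F (s := rel) ⟨φ, hrelφ⟩).toLinearMap
    have : (RingQuot.liftAlgHom F (s := rel) ⟨φ, hrelφ⟩).toLinearMap ∘
        (fun i : Fin (n + 1) => RingQuot.mkAlgHom F rel (ι F i)) =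
        fun i : Fin (n + 1) =>
          (TrivSqZeroExt.inr (Pi.single i 1) : TrivSqZeroExt F (Fin (n + 1) → F)) := by
      funext i
      simp only [Function.comp_apply, AlgHom.toLinearMap_apply,
        RingQuot.liftAlgHom_mkAlgHom_apply, hφι]
    rw [this]
    have h1 : LinearIndependent F (fun i : Fin (n + 1) => Pi.single i (1 : F)) := by
      have heq : (fun i : Fin (n + 1) => Pi.single i (1 : F)) =
          ⇑(Pi.basisFun F (Fin (n + 1))) :=
        funext fun i => (Pi.basisFun_apply F (Fin (n + 1)) i).symm
      rw [heq]
      exact (Pi.basisFun F (Fin (n + 1))).linearIndependent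
    have := h1.map' (TrivSqZeroExt.inrHom F (Fin (n + 1) → F))
      (LinearMap.ker_eq_bot.mpr TrivSqZeroExt.inr_injective)
    exact this
  · -- the alternating sum vanishes in the quotient
    intro i
    rw [← altSum_algHom (RingQuot.mkAlgHom F rel), haltG, map_smul, hmkG, smul_zero]
end
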